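/- arXiv:1201.1242 — 8 statements merged into one kernel-verified Lean document; each statement's English description precedes it below -/
import Mathlib

section
/- The functions ũ and ṽ are continuous and strictly increasing on [a, b₀]. -/
open Filter Topology intervalIntegral

lemma key_aux
    (f : ℝ → ℝ) (hf : Continuous f)
    (hf0 : ∀ q ∈ Set.Icc (-1:ℝ) 1, f q = 0)
    (hfpos : ∀ q : ℝ, q ∉ Set.Icc (-1:ℝ) 1 → 0 < f q)
    (c : ℝ) (hc : 0 < c)
    (U : ℝ → ℝ) (hU : ∀ q, U q = c * ∫ x in (0:ℝ)..q, f x)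
    (a b0 : ℝ) (ha : a < 0) (hb : 0 < b0)
    (Ut : ℝ → ℝ)
    (hneg : ∀ y : ℝ, y < 0 → Ut y = U (y-1))
    (hpos : ∀ y : ℝ, 0 < y → Ut y = U (y+1))
    (hzero : Ut 0 = 0) :
    ContinuousOn Ut (Set.Icc a b0) ∧ StrictMonoOn Ut (Set.Icc a b0) := by
  have hfnn : ∀ x : ℝ, 0 ≤ f x := by
    intro x
    by_cases hx : x ∈ Set.Icc (-1:ℝ) 1
    · exact le_of_eq (hf0 x hx).symm
    · exact (hfpos x hx).le
  have hint : ∀ p q : ℝ, IntervalIntegrable f MeasureTheory.volume p q :=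
    fun p q => hf.intervalIntegrable p q
  have hUcont : Continuous U := by
    have : Continuous fun q : ℝ => c * ∫ x in (0:ℝ)..q, f x :=
      continuous_const.mul (intervalIntegral.continuous_primitive hint 0)
    exact (funext hU : U = _) ▸ this
  -- U vanishes on [-1,1]
  have hU0 : ∀ q ∈ Set.Icc (-1:ℝ) 1, U q = 0 := by
    intro q hq
    rw [hU]
    have : (∫ x in (0:ℝ)..q, f x) = ∫ x in (0:ℝ)..q, (0:ℝ) := by
      apply intervalIntegral.integral_congr
      intro x hx
      have hx' : x ∈ Set.Icc (-1:ℝ) 1 :=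
        Set.uIcc_subset_Icc (by constructor <;> norm_num) hq hx
      exact hf0 x hx'
    rw [this]
    simp
  have hdiff : ∀ q1 q2 : ℝ, U q2 - U q1 = c * ∫ x in q1..q2, f x := by
    intro q1 q2
    rw [hU, hU, ← mul_sub]
    congr 1
    have := intervalIntegral.integral_add_adjacent_intervals (hint 0 q1) (hint q1 q2)
    linarith
  have hmono : ∀ q1 q2 : ℝ, q1 ≤ q2 → U q1 ≤ U q2 := by
    intro q1 q2 h
    have h1 : 0 ≤ ∫ x in q1..q2, f x :=
      intervalIntegral.integral_nonneg h (fun x _ => hfnn x)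
    nlinarith [hdiff q1 q2]
  have hstrict : ∀ q1 q2 : ℝ, q1 < q2 →
      (∀ x ∈ Set.Ioo q1 q2, x ∉ Set.Icc (-1:ℝ) 1) → U q1 < U q2 := by
    intro q1 q2 h h'
    have h1 : 0 < ∫ x in q1..q2, f x :=
      intervalIntegral.intervalIntegral_pos_of_pos_on (hint q1 q2)
        (fun x hx => hfpos x (h' x hx)) h
    nlinarith [hdiff q1 q2]
  have hUm1 : U (-1) = 0 := hU0 (-1) (by constructor <;> norm_num)
  have hU1 : U 1 = 0 := hU0 1 (by constructor <;> norm_num)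
  constructor
  · -- continuity
    have hg : Continuous fun y : ℝ => if y ≤ 0 then U (y-1) else U (y+1) := by
      apply Continuous.if_le
      · exact hUcont.comp (continuous_id.sub continuous_const)
      · exact hUcont.comp (continuous_id.add continuous_const)
      · exact continuous_id
      · exact continuous_const
      · intro y hy
        subst hy
        simp [hUm1, hU1]
    apply ContinuousOn.congr hg.continuousOn
    intro y _
    show Ut y = if y ≤ 0 then U (y-1) else U (y+1)
    rcases lt_trichotomy y 0 with h | h | h
    · rw [hneg y h, if_pos h.le]
    · subst h; rw [hzero, if_pos le_rfl]
      simpa using hUm1.symm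
    · rw [hpos y h, if_neg (not_le.mpr h)]
  · -- strict monotonicity
    intro y1 _ y2 _ h12
    rcases lt_trichotomy y2 0 with h2 | h2 | h2
    · rw [hneg y1 (h12.trans h2), hneg y2 h2]
      apply hstrict _ _ (by linarith)
      intro x hx hx'
      have := hx.2
      have := hx'.1
      linarith
    · subst h2
      rw [hneg y1 h12, hzero, ← hUm1]
      apply hstrict _ _ (by linarith)
      intro x hx hx'
      have := hx.2
      have := hx'.1
      linarith
    · rw [hpos y2 h2]
      have hr : (0:ℝ) < U (y2+1) := by
        rw [← hU1]
        apply hstrict _ _ (by linarith)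
        intro x hx hx'
        have := hx.1
        have := hx'.2
        linarith
      rcases lt_trichotomy y1 0 with h1 | h1 | h1
      · rw [hneg y1 h1]
        have hl : U (y1-1) < 0 := by
          rw [← hUm1]
          apply hstrict _ _ (by linarith)
          intro x hx hx'
          have := hx.2
          have := hx'.1
          linarith
        linarith
      · subst h1; rw [hzero]; exact hr
      · rw [hpos y1 h1]
        apply hstrict _ _ (by linarith)
        intro x hx hx'
        have := hx.1
        have := hx'.2
        linarith

/-- The functions ũ and ṽ are continuous and strictly increasing on [a, b₀]. -/
theorem util_vtil_continuous_strictMono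
    (lam bet : ℝ → ℝ)
    (hlam_smooth : ContDiff ℝ 1 lam)
    (hlam_bdd : ∃ M : ℝ, ∀ q : ℝ, |lam q| ≤ M)
    (hlam_zero : ∀ q ∈ Set.Icc (-1 : ℝ) 1, lam q = 0)
    (hlam_pos : ∀ q : ℝ, q ∉ Set.Icc (-1 : ℝ) 1 → 0 < lam q)
    (hbet_smooth : ContDiff ℝ 1 bet)
    (hbet_bdd : ∃ M : ℝ, ∀ q : ℝ, |bet q| ≤ M)
    (u v : ℝ → ℝ)
    (hu : ∀ q : ℝ, u q =
      ∫ x in (0:ℝ)..q, lam x * Real.exp (-2 * ∫ y in (0:ℝ)..x, bet y * lam y))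
    (hv : ∀ q : ℝ, v q =
      2 * ∫ x in (0:ℝ)..q, lam x * Real.exp (2 * ∫ y in (0:ℝ)..x, bet y * lam y))
    (a b0 : ℝ) (ha : a < 0) (hb : 0 < b0)
    (util vtil : ℝ → ℝ)
    (hutil_neg : ∀ y : ℝ, y < 0 → util y = u (y - 1))
    (hutil_pos : ∀ y : ℝ, 0 < y → util y = u (y + 1))
    (hutil_zero : util 0 = 0)
    (hvtil_neg : ∀ y : ℝ, y < 0 → vtil y = v (y - 1))
    (hvtil_pos : ∀ y : ℝ, 0 < y → vtil y = v (y + 1))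
    (hvtil_zero : vtil 0 = 0) :
    ContinuousOn util (Set.Icc a b0) ∧ StrictMonoOn util (Set.Icc a b0) ∧
    ContinuousOn vtil (Set.Icc a b0) ∧ StrictMonoOn vtil (Set.Icc a b0) := by
  have hlc : Continuous lam := hlam_smooth.continuous
  have hbc : Continuous bet := hbet_smooth.continuous
  have hprim : Continuous fun x : ℝ => ∫ y in (0:ℝ)..x, bet y * lam y :=
    intervalIntegral.continuous_primitive
      (fun p q => (hbc.mul hlc).intervalIntegrable p q) 0
  have hexp : ∀ (c : ℝ), Continuous fun x : ℝ =>
      lam x * Real.exp (c * ∫ y in (0:ℝ)..x, bet y * lam y) :=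
    fun c => hlc.mul (Real.continuous_exp.comp (continuous_const.mul hprim))
  have hzero : ∀ (c : ℝ), ∀ q ∈ Set.Icc (-1:ℝ) 1,
      lam q * Real.exp (c * ∫ y in (0:ℝ)..q, bet y * lam y) = 0 := by
    intro c q hq
    rw [hlam_zero q hq, zero_mul]
  have hposf : ∀ (c : ℝ), ∀ q : ℝ, q ∉ Set.Icc (-1:ℝ) 1 →
      0 < lam q * Real.exp (c * ∫ y in (0:ℝ)..q, bet y * lam y) :=
    fun c q hq => mul_pos (hlam_pos q hq) (Real.exp_pos _)
  obtain ⟨hc1, hm1⟩ := key_aux _ (hexp (-2)) (hzero (-2)) (hposf (-2)) 1 one_pos u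
    (fun q => by rw [hu q, one_mul]) a b0 ha hb util hutil_neg hutil_pos hutil_zero
  obtain ⟨hc2, hm2⟩ := key_aux _ (hexp 2) (hzero 2) (hposf 2) 2 two_pos v
    hv a b0 ha hb vtil hvtil_neg hvtil_pos hvtil_zero
  exact ⟨hc1, hm1, hc2, hm2⟩
end

section
/- There exists a constant C > 0 such that for all ε ∈ (0,1), all δ, δ′ with 0 < δ′ < δ ≤ 1, and all q ∈ [−1−δ′, 1+δ′]: | (u^ε(q) − u^ε(−1−δ))/(u^ε(1+δ) − u^ε(−1−δ)) − (ũ(0) − ũ(−δ))/(ũ(δ) − ũ(−δ)) | ≤ (ũ(δ′) − ũ(−δ′) + C·ε)/(ũ(δ) − ũ(−δ)). -/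
open Filter Topology intervalIntegral

/-- uniform estimate (Lemma 2.7 of the paper, model case with zero drift)
on the exit probability through the right endpoint of [−1−δ, 1+δ]. -/
theorem exit_probability_estimate
    (lam : ℝ → ℝ)
    (hlam_smooth : ContDiff ℝ 1 lam)
    (hlam_bdd : ∃ M : ℝ, ∀ q : ℝ, |lam q| ≤ M)
    (hlam_zero : ∀ q ∈ Set.Icc (-1 : ℝ) 1, lam q = 0)
    (hlam_pos : ∀ q : ℝ, q ∉ Set.Icc (-1 : ℝ) 1 → 0 < lam q)
    (u : ℝ → ℝ) (hu : ∀ q : ℝ, u q = ∫ x in (0:ℝ)..q, lam x)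
    (uE : ℝ → ℝ → ℝ) (huE : ∀ ε q : ℝ, uE ε q = ∫ x in (0:ℝ)..q, (lam x + ε))
    (util : ℝ → ℝ)
    (hutil_neg : ∀ y : ℝ, y < 0 → util y = u (y - 1))
    (hutil_pos : ∀ y : ℝ, 0 < y → util y = u (y + 1))
    (hutil_zero : util 0 = 0) :
    ∃ C > (0:ℝ), ∀ ε ∈ Set.Ioo (0:ℝ) 1, ∀ δ δ' : ℝ, 0 < δ' → δ' < δ → δ ≤ 1 →
      ∀ q ∈ Set.Icc (-1 - δ') (1 + δ'),
        |(uE ε q - uE ε (-1 - δ)) / (uE ε (1 + δ) - uE ε (-1 - δ)) -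
            (util 0 - util (-δ)) / (util δ - util (-δ))| ≤
          (util δ' - util (-δ') + C * ε) / (util δ - util (-δ)) := by
  have hcont : Continuous lam := hlam_smooth.continuous
  have hint : ∀ x y : ℝ, IntervalIntegrable lam MeasureTheory.volume x y :=
    fun x y => hcont.intervalIntegrable x y
  have hnn : ∀ x : ℝ, 0 ≤ lam x := by
    intro x
    by_cases hx : x ∈ Set.Icc (-1 : ℝ) 1
    · exact le_of_eq (hlam_zero x hx).symm
    · exact (hlam_pos x hx).le
  have hsub : ∀ x y : ℝ, u y - u x = ∫ t in x..y, lam t := by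
    intro x y
    rw [hu, hu, intervalIntegral.integral_interval_sub_left (hint 0 y) (hint 0 x)]
  have hmono : ∀ x y : ℝ, x ≤ y → u x ≤ u y := by
    intro x y hxy
    have h1 := hsub x y
    have h2 : 0 ≤ ∫ t in x..y, lam t :=
      intervalIntegral.integral_nonneg hxy (fun t _ => hnn t)
    linarith
  have hu1 : u 1 = 0 := by
    rw [hu, intervalIntegral.integral_congr (g := fun _ => (0:ℝ))
      (fun x hx => by
        apply hlam_zero
        rw [Set.uIcc_of_le (by norm_num : (0:ℝ) ≤ 1)] at hx
        exact ⟨by linarith [hx.1], hx.2⟩),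
      intervalIntegral.integral_zero]
  have hum1 : u (-1) = 0 := by
    rw [hu, intervalIntegral.integral_congr (g := fun _ => (0:ℝ))
      (fun x hx => by
        apply hlam_zero
        rw [Set.uIcc_of_ge (by norm_num : (-1:ℝ) ≤ 0)] at hx
        exact ⟨hx.1, by linarith [hx.2]⟩),
      intervalIntegral.integral_zero]
  have hpos_right : ∀ t : ℝ, 0 < t → 0 < u (1 + t) := by
    intro t ht
    have h1 : u (1 + t) - u 1 = ∫ x in (1:ℝ)..(1+t), lam x := hsub 1 (1+t)
    have h2 : 0 < ∫ x in (1:ℝ)..(1+t), lam x := by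
      apply intervalIntegral.intervalIntegral_pos_of_pos_on (hint 1 (1+t))
      · intro x hx
        apply hlam_pos
        intro hmem
        exact absurd hmem.2 (not_le.mpr hx.1)
      · linarith
    linarith
  have hneg_left : ∀ t : ℝ, 0 < t → u (-1 - t) < 0 := by
    intro t ht
    have h1 : u (-1) - u (-1 - t) = ∫ x in (-1-t)..(-1:ℝ), lam x := hsub _ _
    have h2 : 0 < ∫ x in (-1-t)..(-1:ℝ), lam x := by
      apply intervalIntegral.intervalIntegral_pos_of_pos_on (hint _ _)
      · intro x hx
        apply hlam_pos
        intro hmem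
        have := hmem.1
        have := hx.2
        linarith
      · linarith
    linarith
  have huE' : ∀ ε q : ℝ, uE ε q = u q + q * ε := by
    intro ε q
    rw [huE, hu, intervalIntegral.integral_add (hint 0 q) intervalIntegrable_const,
      intervalIntegral.integral_const]
    simp [smul_eq_mul]
  refine ⟨8, by norm_num, ?_⟩
  rintro ε ⟨hε0, hε1⟩ δ δ' hδ'0 hδ'δ hδ1 q ⟨hq1, hq2⟩
  have hδ0 : 0 < δ := hδ'0.trans hδ'δ
  have hud : util δ = u (1 + δ) := by rw [hutil_pos δ hδ0, add_comm]
  have hund : util (-δ) = u (-1 - δ) := by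
    rw [hutil_neg (-δ) (by linarith), show -δ - 1 = -1 - δ from by ring]
  have hud' : util δ' = u (1 + δ') := by rw [hutil_pos δ' hδ'0, add_comm]
  have hund' : util (-δ') = u (-1 - δ') := by
    rw [hutil_neg (-δ') (by linarith), show -δ' - 1 = -1 - δ' from by ring]
  rw [hutil_zero, hud, hund, hud', hund', huE' ε q, huE' ε (-1-δ), huE' ε (1+δ)]
  -- abbreviations
  have hm : u (-1 - δ) < 0 := hneg_left δ hδ0
  have hp : 0 < u (1 + δ) := hpos_right δ hδ0
  have hm' : u (-1 - δ') ≤ 0 := by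
    have := hneg_left δ' hδ'0; linarith
  have hp' : 0 ≤ u (1 + δ') := (hpos_right δ' hδ'0).le
  set m : ℝ := u (-1 - δ) with hm_def
  set v : ℝ := u q with hv_def
  set U : ℝ := u (1 + δ') - u (-1 - δ') with hU_def
  have hA : 0 < u (1 + δ) - m := by linarith
  set A : ℝ := u (1 + δ) - m with hA_def
  -- bounds on v
  have hvU : v ≤ U := by
    have h1 : v ≤ u (1 + δ') := hmono q (1 + δ') hq2
    simp only [hU_def]; linarith
  have hvL : -U ≤ v := by
    have h1 : u (-1 - δ') ≤ v := hmono (-1 - δ') q (by linarith)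
    simp only [hU_def]; linarith
  have hU0 : 0 ≤ U := by simp only [hU_def]; linarith
  -- bounds on q
  have hq2' : q ≤ 2 := by linarith
  have hq1' : -2 ≤ q := by linarith
  have hmA : -m ≤ A := by simp only [hA_def]; linarith
  -- rewrite numerator/denominator
  have hnum : v + q * ε - (m + (-1 - δ) * ε) = v - m + (q + 1 + δ) * ε := by ring
  have hden : u (1 + δ) + (1 + δ) * ε - (m + (-1 - δ) * ε) = A + 2 * (1 + δ) * ε := by
    simp only [hA_def]; ring
  rw [hnum, hden]
  have hDe : 0 ≤ 2 * (1 + δ) * ε := by positivity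
  have hDpos : 0 < A + 2 * (1 + δ) * ε := by linarith
  have hkey : (v - m + (q + 1 + δ) * ε) / (A + 2 * (1 + δ) * ε) - (0 - m) / A
      = ((v - m + (q + 1 + δ) * ε) * A - (A + 2 * (1 + δ) * ε) * (0 - m))
        / ((A + 2 * (1 + δ) * ε) * A) :=
    div_sub_div _ _ hDpos.ne' hA.ne'
  rw [hkey, abs_div, abs_of_pos (mul_pos hDpos hA)]
  -- numerator bound
  have hqe1 : q * ε ≤ 2 * ε := mul_le_mul_of_nonneg_right hq2' hε0.le
  have hqe2 : (-2) * ε ≤ q * ε := mul_le_mul_of_nonneg_right hq1' hε0.le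
  have hde1 : (1 + δ) * ε ≤ 2 * ε :=
    mul_le_mul_of_nonneg_right (by linarith) hε0.le
  have hde0 : 0 ≤ (1 + δ) * ε := mul_nonneg (by linarith) hε0.le
  have h1 : A * v ≤ A * U := mul_le_mul_of_nonneg_left hvU hA.le
  have h2 : A * (-U) ≤ A * v := mul_le_mul_of_nonneg_left hvL hA.le
  have h3 : A * (q * ε) ≤ A * (2 * ε) := mul_le_mul_of_nonneg_left hqe1 hA.le
  have h4 : A * ((-2) * ε) ≤ A * (q * ε) := mul_le_mul_of_nonneg_left hqe2 hA.le
  have h5 : A * ((1 + δ) * ε) ≤ A * (2 * ε) := mul_le_mul_of_nonneg_left hde1 hA.le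
  have h6 : 0 ≤ A * ((1 + δ) * ε) := mul_nonneg hA.le hde0
  have h7 : (-m) * ((1 + δ) * ε) ≤ A * (2 * ε) :=
    mul_le_mul hmA hde1 hde0 hA.le
  have h8 : 0 ≤ (-m) * ((1 + δ) * ε) := mul_nonneg (by linarith) hde0
  have hnumb : |(v - m + (q + 1 + δ) * ε) * A - (A + 2 * (1 + δ) * ε) * (0 - m)|
      ≤ (U + 8 * ε) * A := by
    rw [abs_le]
    constructor
    · linarith [h1, h2, h3, h4, h5, h6, h7, h8]
    · linarith [h1, h2, h3, h4, h5, h6, h7, h8]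
  calc |(v - m + (q + 1 + δ) * ε) * A - (A + 2 * (1 + δ) * ε) * (0 - m)|
        / ((A + 2 * (1 + δ) * ε) * A)
      ≤ ((U + 8 * ε) * A) / (A * A) := by
        apply div_le_div₀ (by positivity) hnumb (by positivity)
        have h9 : A ≤ A + 2 * (1 + δ) * ε := by linarith
        exact mul_le_mul_of_nonneg_right h9 hA.le
    _ = (U + 8 * ε) / A := by
        rw [mul_div_mul_right _ _ hA.ne']
end

section
/- Define g̃(y) = (1/W)·[ ξ₂(y)·∫₀^y ξ₁(z)·G(z)·2λ̃(z) dz + ξ₁(y)·∫_y^{b₀} ξ₂(z)·G(z)·2λ̃(z) dz ] for y ∈ (0, b₀]. Then g̃ is twice differentiable on (0, b₀) and satisfies (μ + n²/λ̃(y)²)·g̃(y) − D_ṽD_ũ g̃(y) = G(y) for all y ∈ (0, b₀). -/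
open Filter Topology intervalIntegral

/-- the function g̃ built from the two solutions ξ₁, ξ₂ by the
variation-of-constants formula is twice differentiable on (0, b₀) (in the generalized
sense: g̃′ = λ̃·D_ũg̃ and D_ũg̃ is differentiable) and satisfies
(μ + n²/λ̃²)·g̃ − D_ṽD_ũg̃ = G there. -/
theorem variation_of_constants_solves_ode
    (b0 μ : ℝ) (hb0 : 0 < b0) (hμ : 0 < μ) (n : ℤ) (hn : n ≠ 0)
    (lamt : ℝ → ℝ)
    (hlamt_cont : ContinuousOn lamt (Set.Ioc 0 b0))
    (hlamt_pos : ∀ y ∈ Set.Ioc (0:ℝ) b0, 0 < lamt y)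
    (hlamt_lim : Tendsto lamt (𝓝[>] (0:ℝ)) (𝓝 0))
    (G : ℝ → ℝ) (hG : ContinuousOn G (Set.Icc 0 b0))
    (ξ₁ ξ₂ Dξ₁ Dξ₂ : ℝ → ℝ)
    (hξ₁nn : ∀ y ∈ Set.Ioc (0:ℝ) b0, 0 ≤ ξ₁ y)
    (hξ₂nn : ∀ y ∈ Set.Ioc (0:ℝ) b0, 0 ≤ ξ₂ y)
    (hξ₁d : ∀ y ∈ Set.Ioc (0:ℝ) b0,
      HasDerivWithinAt ξ₁ (lamt y * Dξ₁ y) (Set.Ioc 0 b0) y)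
    (hDξ₁d : ∀ y ∈ Set.Ioc (0:ℝ) b0,
      HasDerivWithinAt Dξ₁ (2 * lamt y * ((μ + (n:ℝ)^2 / (lamt y)^2) * ξ₁ y))
        (Set.Ioc 0 b0) y)
    (hξ₂d : ∀ y ∈ Set.Ioc (0:ℝ) b0,
      HasDerivWithinAt ξ₂ (lamt y * Dξ₂ y) (Set.Ioc 0 b0) y)
    (hDξ₂d : ∀ y ∈ Set.Ioc (0:ℝ) b0,
      HasDerivWithinAt Dξ₂ (2 * lamt y * ((μ + (n:ℝ)^2 / (lamt y)^2) * ξ₂ y))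
        (Set.Ioc 0 b0) y)
    (hξ₁mono : MonotoneOn ξ₁ (Set.Ioc 0 b0))
    (hξ₁lim : Tendsto ξ₁ (𝓝[>] (0:ℝ)) (𝓝 0))
    (hξ₂anti : AntitoneOn ξ₂ (Set.Ioc 0 b0))
    (hξ₂b0 : ξ₂ b0 = 0)
    (hDξ₁mono : MonotoneOn Dξ₁ (Set.Ioc 0 b0))
    (hDξ₂mono : MonotoneOn Dξ₂ (Set.Ioc 0 b0))
    (hDξ₁lim : Tendsto Dξ₁ (𝓝[>] (0:ℝ)) (𝓝 0))
    (hDξ₂b0 : Dξ₂ b0 < 0)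
    (W : ℝ) (hW : 0 < W)
    (hWr : ∀ y ∈ Set.Ioc (0:ℝ) b0, Dξ₁ y * ξ₂ y - Dξ₂ y * ξ₁ y = W)
    (gt : ℝ → ℝ)
    (hgt : ∀ y : ℝ, gt y = (1 / W) *
      (ξ₂ y * (∫ z in (0:ℝ)..y, ξ₁ z * G z * (2 * lamt z)) +
       ξ₁ y * (∫ z in y..b0, ξ₂ z * G z * (2 * lamt z)))) :
    ∃ Dgt : ℝ → ℝ,
      (∀ y ∈ Set.Ioo (0:ℝ) b0, HasDerivAt gt (lamt y * Dgt y) y) ∧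
      (∀ y ∈ Set.Ioo (0:ℝ) b0,
        HasDerivAt Dgt
          (2 * lamt y * ((μ + (n:ℝ)^2 / (lamt y)^2) * gt y - G y)) y) := by
  have hsub : Set.Ioo (0:ℝ) b0 ⊆ Set.Ioc 0 b0 := Set.Ioo_subset_Ioc_self
  have hsub' : Set.Ioc (0:ℝ) b0 ⊆ Set.Icc 0 b0 := Set.Ioc_subset_Icc_self
  have hnhds : ∀ y ∈ Set.Ioo (0:ℝ) b0, Set.Ioc 0 b0 ∈ 𝓝 y := fun y hy =>
    Filter.mem_of_superset (isOpen_Ioo.mem_nhds hy) hsub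
  -- continuity facts
  have hξ₁c : ContinuousOn ξ₁ (Set.Ioc 0 b0) := fun y hy =>
    (hξ₁d y hy).continuousWithinAt
  have hξ₂c : ContinuousOn ξ₂ (Set.Ioc 0 b0) := fun y hy =>
    (hξ₂d y hy).continuousWithinAt
  set f : ℝ → ℝ := fun z => ξ₁ z * G z * (2 * lamt z) with hfdef
  set g : ℝ → ℝ := fun z => ξ₂ z * G z * (2 * lamt z) with hgdef
  have hfc : ContinuousOn f (Set.Ioc 0 b0) :=
    ((hξ₁c.mul (hG.mono hsub')).mul (continuousOn_const.mul hlamt_cont))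
  have hgc : ContinuousOn g (Set.Ioc 0 b0) :=
    ((hξ₂c.mul (hG.mono hsub')).mul (continuousOn_const.mul hlamt_cont))
  -- a bound for lamt on (0, b0]
  obtain ⟨Ml, hMl⟩ : ∃ M : ℝ, ∀ z ∈ Set.Ioc (0:ℝ) b0, |lamt z| ≤ M := by
    have h1 : ∀ᶠ z in 𝓝[>] (0:ℝ), |lamt z| < 1 := by
      have := hlamt_lim (Metric.ball_mem_nhds (0:ℝ) one_pos)
      filter_upwards [this] with z hz
      simpa [Real.dist_eq] using hz
    rw [eventually_nhdsWithin_iff] at h1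
    obtain ⟨δ, hδ, hδ1⟩ := Metric.eventually_nhds_iff.mp h1
    set δ' := min (δ/2) b0 with hδ'
    have hδ'pos : 0 < δ' := lt_min (half_pos hδ) hb0
    have hcomp : IsCompact (Set.Icc δ' b0) := isCompact_Icc
    have hss : Set.Icc δ' b0 ⊆ Set.Ioc 0 b0 := fun z hz =>
      ⟨lt_of_lt_of_le hδ'pos hz.1, hz.2⟩
    obtain ⟨C, hC⟩ := hcomp.exists_bound_of_continuousOn (hlamt_cont.mono hss)
    refine ⟨max 1 C, fun z hz => ?_⟩
    rcases le_or_gt δ' z with h | h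
    · exact le_trans (by simpa using hC z ⟨h, hz.2⟩) (le_max_right _ _)
    · refine le_trans (le_of_lt ?_) (le_max_left _ _)
      have hd : dist z 0 < δ := by
        rw [Real.dist_eq, sub_zero, abs_of_pos hz.1]
        exact lt_of_lt_of_le (h.trans_le (min_le_left _ _)) (le_of_lt (half_lt_self hδ))
      exact hδ1 hd hz.1
  -- a bound for G on [0,b0]
  obtain ⟨MG, hMG⟩ := isCompact_Icc.exists_bound_of_continuousOn hG
  -- f is integrable on (0, b0]
  have hfbdd : ∀ z ∈ Set.Ioc (0:ℝ) b0, |f z| ≤ ξ₁ b0 * MG * (2 * Ml) := by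
    intro z hz
    have h1 : 0 ≤ ξ₁ z := hξ₁nn z hz
    have h2 : ξ₁ z ≤ ξ₁ b0 := hξ₁mono hz ⟨hb0, le_rfl⟩ hz.2
    have h3 : |G z| ≤ MG := by simpa using hMG z (hsub' hz)
    have h4 : |lamt z| ≤ Ml := hMl z hz
    have h0G : (0:ℝ) ≤ MG := le_trans (abs_nonneg _) h3
    have h0l : (0:ℝ) ≤ Ml := le_trans (abs_nonneg _) h4
    calc |f z| = |ξ₁ z| * |G z| * (2 * |lamt z|) := by
          simp [hfdef, abs_mul]
      _ ≤ ξ₁ b0 * MG * (2 * Ml) := by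
          rw [abs_of_nonneg h1]
          have hb : 0 ≤ ξ₁ b0 := le_trans h1 h2
          have hGn : 0 ≤ |G z| := abs_nonneg _
          have hln : 0 ≤ |lamt z| := abs_nonneg _
          apply mul_le_mul (mul_le_mul h2 h3 hGn hb) (by linarith) (by linarith)
            (mul_nonneg hb h0G)
  have hfint : MeasureTheory.IntegrableOn f (Set.Ioc 0 b0) := by
    refine ⟨hfc.aestronglyMeasurable measurableSet_Ioc, ?_⟩
    refine MeasureTheory.HasFiniteIntegral.restrict_of_bounded
      (C := ξ₁ b0 * MG * (2 * Ml)) (by simp) ?_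
    filter_upwards [MeasureTheory.ae_restrict_mem measurableSet_Ioc] with z hz
    simpa [Real.norm_eq_abs] using hfbdd z hz
  have hfint' : ∀ y ∈ Set.Ioo (0:ℝ) b0, IntervalIntegrable f MeasureTheory.volume 0 y := by
    intro y hy
    rw [intervalIntegrable_iff_integrableOn_Ioc_of_le hy.1.le]
    exact hfint.mono_set (Set.Ioc_subset_Ioc_right hy.2.le)
  have hgint : ∀ y ∈ Set.Ioo (0:ℝ) b0, IntervalIntegrable g MeasureTheory.volume y b0 := by
    intro y hy
    apply ContinuousOn.intervalIntegrable
    apply hgc.mono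
    rw [Set.uIcc_of_le hy.2.le]
    exact fun z hz => ⟨lt_of_lt_of_le hy.1 hz.1, hz.2⟩
  -- ContinuousAt of f and g at interior points
  have hfca : ∀ y ∈ Set.Ioo (0:ℝ) b0, ContinuousAt f y := fun y hy =>
    (hfc y (hsub hy)).continuousAt (hnhds y hy)
  have hgca : ∀ y ∈ Set.Ioo (0:ℝ) b0, ContinuousAt g y := fun y hy =>
    (hgc y (hsub hy)).continuousAt (hnhds y hy)
  -- derivatives of the integral pieces
  set A : ℝ → ℝ := fun y => ∫ z in (0:ℝ)..y, f z with hAdef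
  set B : ℝ → ℝ := fun y => ∫ z in y..b0, g z with hBdef
  have hAd : ∀ y ∈ Set.Ioo (0:ℝ) b0, HasDerivAt A (f y) y := by
    intro y hy
    exact intervalIntegral.integral_hasDerivAt_right (hfint' y hy)
      ((ContinuousOn.stronglyMeasurableAtFilter isOpen_Ioo
        (hfc.mono hsub) y hy))
      (hfca y hy)
  have hBd : ∀ y ∈ Set.Ioo (0:ℝ) b0, HasDerivAt B (-(g y)) y := by
    intro y hy
    exact intervalIntegral.integral_hasDerivAt_left (hgint y hy)
      ((ContinuousOn.stronglyMeasurableAtFilter isOpen_Ioo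
        (hgc.mono hsub) y hy))
      (hgca y hy)
  -- the candidate Dgt
  refine ⟨fun y => (1 / W) * (Dξ₂ y * A y + Dξ₁ y * B y), ?_, ?_⟩
  · intro y hy
    have hyIoc := hsub hy
    have h1 : HasDerivAt ξ₁ (lamt y * Dξ₁ y) y :=
      (hξ₁d y hyIoc).hasDerivAt (hnhds y hy)
    have h2 : HasDerivAt ξ₂ (lamt y * Dξ₂ y) y :=
      (hξ₂d y hyIoc).hasDerivAt (hnhds y hy)
    have hmain : HasDerivAt (fun y => (1 / W) *
        (ξ₂ y * A y + ξ₁ y * B y))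
        ((1 / W) * ((lamt y * Dξ₂ y * A y + ξ₂ y * f y) +
          (lamt y * Dξ₁ y * B y + ξ₁ y * (-(g y))))) y :=
      (((h2.mul (hAd y hy)).add (h1.mul (hBd y hy)))).const_mul (1 / W)
    have heq : gt = fun y => (1 / W) * (ξ₂ y * A y + ξ₁ y * B y) := funext hgt
    rw [heq]
    convert hmain using 1
    simp only [hfdef, hgdef]
    ring
  · intro y hy
    have hyIoc := hsub hy
    have h1 : HasDerivAt Dξ₁ (2 * lamt y * ((μ + (n:ℝ)^2 / (lamt y)^2) * ξ₁ y)) y :=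
      (hDξ₁d y hyIoc).hasDerivAt (hnhds y hy)
    have h2 : HasDerivAt Dξ₂ (2 * lamt y * ((μ + (n:ℝ)^2 / (lamt y)^2) * ξ₂ y)) y :=
      (hDξ₂d y hyIoc).hasDerivAt (hnhds y hy)
    have hmain : HasDerivAt (fun y => (1 / W) * (Dξ₂ y * A y + Dξ₁ y * B y))
        ((1 / W) * ((2 * lamt y * ((μ + (n:ℝ)^2 / (lamt y)^2) * ξ₂ y) * A y +
            Dξ₂ y * f y) +
          (2 * lamt y * ((μ + (n:ℝ)^2 / (lamt y)^2) * ξ₁ y) * B y +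
            Dξ₁ y * (-(g y))))) y :=
      (((h2.mul (hAd y hy)).add (h1.mul (hBd y hy)))).const_mul (1 / W)
    convert hmain using 1
    have hWy := hWr y hyIoc
    have hA : (∫ z in (0:ℝ)..y, ξ₁ z * G z * (2 * lamt z)) = A y := rfl
    have hB : (∫ z in y..b0, ξ₂ z * G z * (2 * lamt z)) = B y := rfl
    have hfy : f y = ξ₁ y * G y * (2 * lamt y) := rfl
    have hgy : g y = ξ₂ y * G y * (2 * lamt y) := rfl
    rw [hgt y, hA, hB, hfy, hgy]
    have hWne : W ≠ 0 := ne_of_gt hW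
    linear_combination (norm := (field_simp; ring)) (2 * lamt y * G y / W) * hWy
end

section
/- For all y ∈ (0, b₀]: ξ₂(y)·∫₀^y ξ₁(z)·2λ̃(z) dz ≤ W / inf_{z ∈ (0, y]} (μ + n²/λ̃(z)²). -/
open Filter Topology intervalIntegral

set_option maxHeartbeats 1000000 in
/-- for all y ∈ (0, b₀],
ξ₂(y)·∫₀^y ξ₁(z)·2λ̃(z) dz ≤ W / inf_{z ∈ (0,y]} (μ + n²/λ̃(z)²). -/
theorem xi_two_integral_bound
    (b0 μ : ℝ) (hb0 : 0 < b0) (hμ : 0 < μ) (n : ℤ) (hn : n ≠ 0)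
    (lamt : ℝ → ℝ)
    (hlamt_cont : ContinuousOn lamt (Set.Ioc 0 b0))
    (hlamt_pos : ∀ y ∈ Set.Ioc (0:ℝ) b0, 0 < lamt y)
    (hlamt_lim : Tendsto lamt (𝓝[>] (0:ℝ)) (𝓝 0))
    (ξ₁ ξ₂ Dξ₁ Dξ₂ : ℝ → ℝ)
    (hξ₁nn : ∀ y ∈ Set.Ioc (0:ℝ) b0, 0 ≤ ξ₁ y)
    (hξ₂nn : ∀ y ∈ Set.Ioc (0:ℝ) b0, 0 ≤ ξ₂ y)
    (hξ₁d : ∀ y ∈ Set.Ioc (0:ℝ) b0,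
      HasDerivWithinAt ξ₁ (lamt y * Dξ₁ y) (Set.Ioc 0 b0) y)
    (hDξ₁d : ∀ y ∈ Set.Ioc (0:ℝ) b0,
      HasDerivWithinAt Dξ₁ (2 * lamt y * ((μ + (n:ℝ)^2 / (lamt y)^2) * ξ₁ y))
        (Set.Ioc 0 b0) y)
    (hξ₂d : ∀ y ∈ Set.Ioc (0:ℝ) b0,
      HasDerivWithinAt ξ₂ (lamt y * Dξ₂ y) (Set.Ioc 0 b0) y)
    (hDξ₂d : ∀ y ∈ Set.Ioc (0:ℝ) b0,
      HasDerivWithinAt Dξ₂ (2 * lamt y * ((μ + (n:ℝ)^2 / (lamt y)^2) * ξ₂ y))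
        (Set.Ioc 0 b0) y)
    (hξ₁mono : MonotoneOn ξ₁ (Set.Ioc 0 b0))
    (hξ₁lim : Tendsto ξ₁ (𝓝[>] (0:ℝ)) (𝓝 0))
    (hξ₂anti : AntitoneOn ξ₂ (Set.Ioc 0 b0))
    (hξ₂b0 : ξ₂ b0 = 0)
    (hDξ₁mono : MonotoneOn Dξ₁ (Set.Ioc 0 b0))
    (hDξ₂mono : MonotoneOn Dξ₂ (Set.Ioc 0 b0))
    (hDξ₁lim : Tendsto Dξ₁ (𝓝[>] (0:ℝ)) (𝓝 0))
    (hDξ₂b0 : Dξ₂ b0 < 0)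
    (W : ℝ) (hW : 0 < W)
    (hWr : ∀ y ∈ Set.Ioc (0:ℝ) b0, Dξ₁ y * ξ₂ y - Dξ₂ y * ξ₁ y = W) :
    ∀ y ∈ Set.Ioc (0:ℝ) b0,
      ξ₂ y * (∫ z in (0:ℝ)..y, ξ₁ z * (2 * lamt z)) ≤
        W / sInf ((fun z => μ + (n:ℝ)^2 / (lamt z)^2) '' Set.Ioc 0 y) := by

  intro y hy
  have hysub : Set.Ioc (0:ℝ) y ⊆ Set.Ioc 0 b0 := Set.Ioc_subset_Ioc le_rfl hy.2
  set Φ : ℝ → ℝ := fun z => μ + (n:ℝ)^2 / (lamt z)^2 with hΦ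
  have hΦge : ∀ z, μ ≤ Φ z := by
    intro z
    have : 0 ≤ (n:ℝ)^2 / (lamt z)^2 := div_nonneg (sq_nonneg _) (sq_nonneg _)
    simp only [hΦ]; linarith
  have hbdd : BddBelow (Φ '' Set.Ioc 0 y) := ⟨μ, by rintro _ ⟨z, hz, rfl⟩; exact hΦge z⟩
  have hne : (Φ '' Set.Ioc 0 y).Nonempty := ⟨Φ y, ⟨y, ⟨hy.1, le_rfl⟩, rfl⟩⟩
  set c := sInf (Φ '' Set.Ioc 0 y) with hcdef
  have hμc : μ ≤ c := le_csInf hne (by rintro _ ⟨z, hz, rfl⟩; exact hΦge z)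
  have hcpos : 0 < c := lt_of_lt_of_le hμ hμc
  have hcle : ∀ z ∈ Set.Ioc (0:ℝ) y, c ≤ Φ z := fun z hz => csInf_le hbdd ⟨z, hz, rfl⟩
  have hDξ₁nn : ∀ z ∈ Set.Ioc (0:ℝ) b0, 0 ≤ Dξ₁ z := by
    intro z hz
    refine le_of_tendsto hDξ₁lim ?_
    filter_upwards [Ioo_mem_nhdsGT_of_mem (Set.left_mem_Ico.mpr hz.1)] with w hw
    exact hDξ₁mono ⟨hw.1, hw.2.le.trans hz.2⟩ hz hw.2.le
  have hDξ₂np : ∀ z ∈ Set.Ioc (0:ℝ) b0, Dξ₂ z ≤ 0 :=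
    fun z hz => le_trans (hDξ₂mono hz (Set.right_mem_Ioc.mpr hb0) hz.2) hDξ₂b0.le
  have hcξ₁ : ContinuousOn ξ₁ (Set.Ioc 0 b0) := fun x hx => (hξ₁d x hx).continuousWithinAt
  have hcDξ₁ : ContinuousOn Dξ₁ (Set.Ioc 0 b0) := fun x hx => (hDξ₁d x hx).continuousWithinAt
  set f : ℝ → ℝ := fun z => ξ₁ z * (2 * lamt z) with hfdef
  have hfcont : ContinuousOn f (Set.Ioc 0 b0) := hcξ₁.mul (continuousOn_const.mul hlamt_cont)
  have hfnn : ∀ z ∈ Set.Ioc (0:ℝ) b0, 0 ≤ f z := fun z hz =>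
    mul_nonneg (hξ₁nn z hz) (by have := hlamt_pos z hz; linarith)
  set g : ℝ → ℝ := fun z => 2 * lamt z * (Φ z * ξ₁ z) with hgdef
  have hgcont : ContinuousOn g (Set.Ioc 0 b0) := by
    apply (continuousOn_const.mul hlamt_cont).mul
    apply ContinuousOn.mul _ hcξ₁
    exact continuousOn_const.add (continuousOn_const.div (hlamt_cont.pow 2)
      (fun z hz => pow_ne_zero 2 (ne_of_gt (hlamt_pos z hz))))
  -- key interval bound
  have key : ∀ a ∈ Set.Ioc (0:ℝ) y, ∫ z in a..y, f z ≤ Dξ₁ y / c := by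
    intro a ha
    have hsub : Set.Icc a y ⊆ Set.Ioc 0 b0 := fun x hx =>
      ⟨lt_of_lt_of_le ha.1 hx.1, hx.2.trans hy.2⟩
    have huIcc : Set.uIcc a y = Set.Icc a y := Set.uIcc_of_le ha.2
    have hintf : IntervalIntegrable f MeasureTheory.volume a y :=
      (hfcont.mono (huIcc ▸ hsub)).intervalIntegrable
    have hintg : IntervalIntegrable g MeasureTheory.volume a y :=
      (hgcont.mono (huIcc ▸ hsub)).intervalIntegrable
    have hftc : ∫ z in a..y, g z = Dξ₁ y - Dξ₁ a := by
      apply intervalIntegral.integral_eq_sub_of_hasDeriv_right_of_le ha.2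
        (hcDξ₁.mono hsub) ?_ hintg
      intro x hx
      have hx' : x ∈ Set.Ioc (0:ℝ) b0 := hsub ⟨hx.1.le, hx.2.le⟩
      have hmem : Set.Ioc (0:ℝ) b0 ∈ nhds x :=
        Ioc_mem_nhds hx'.1 (lt_of_lt_of_le hx.2 hy.2)
      have := ((hDξ₁d x hx').hasDerivAt hmem).hasDerivWithinAt (s := Set.Ioi x)
      simpa [hgdef, hΦ, mul_comm, mul_assoc, mul_left_comm] using this
    have hnonneg : 0 ≤ ∫ z in a..y, (g z - c * f z) := by
      apply intervalIntegral.integral_nonneg ha.2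
      intro x hx
      have hx' : x ∈ Set.Ioc (0:ℝ) b0 := hsub hx
      have h1 := hcle x ⟨hx'.1, hx.2⟩
      have h2 := hξ₁nn x hx'
      have h3 := (hlamt_pos x hx').le
      have hrw : g x - c * f x = (Φ x - c) * (2 * lamt x * ξ₁ x) := by
        simp only [hfdef, hgdef]; ring
      rw [hrw]
      have : 0 ≤ 2 * lamt x * ξ₁ x := by positivity
      nlinarith
    have hsplit : (∫ z in a..y, (g z - c * f z))
        = (∫ z in a..y, g z) - c * ∫ z in a..y, f z := by
      rw [intervalIntegral.integral_sub hintg (hintf.const_mul c),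
        intervalIntegral.integral_const_mul]
    have hDa : 0 ≤ Dξ₁ a := hDξ₁nn a ⟨ha.1, ha.2.trans hy.2⟩
    rw [le_div_iff₀ hcpos]
    nlinarith [hnonneg, hsplit, hftc]
  -- smallness region for lamt
  obtain ⟨δ, hδpos, hδ⟩ : ∃ δ > 0, ∀ z ∈ Set.Ioo (0:ℝ) δ, lamt z < 1 := by
    have h : {z | lamt z < 1} ∈ 𝓝[>] (0:ℝ) :=
      hlamt_lim.eventually (Filter.Tendsto.eventually_lt_const one_pos tendsto_id)
    obtain ⟨u, hu, hsub⟩ := mem_nhdsGT_iff_exists_Ioo_subset.mp h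
    exact ⟨u, hu, fun z hz => hsub hz⟩
  set a0 : ℝ := min δ y / 2 with ha0def
  have ha0pos : 0 < a0 := by
    have h := lt_min hδpos hy.1
    simp only [ha0def]; linarith
  have ha0y : a0 < y := by
    have : min δ y ≤ y := min_le_right _ _
    have := hy.1
    simp only [ha0def]; linarith
  have ha0δ : a0 < δ := by
    have : min δ y ≤ δ := min_le_left _ _
    simp only [ha0def]; linarith
  set C : ℝ := ξ₁ y * 2 with hCdef
  have hCnn : 0 ≤ C := by
    have := hξ₁nn y hy; simp only [hCdef]; linarith
  have hbound : ∀ z ∈ Set.Ioc (0:ℝ) a0, ‖f z‖ ≤ C := by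
    intro z hz
    have hzb : z ∈ Set.Ioc (0:ℝ) b0 := ⟨hz.1, (hz.2.trans ha0y.le).trans hy.2⟩
    have hl1 : lamt z < 1 := hδ z ⟨hz.1, lt_of_le_of_lt hz.2 ha0δ⟩
    have hlp := hlamt_pos z hzb
    have hmon : ξ₁ z ≤ ξ₁ y := hξ₁mono hzb hy (hz.2.trans ha0y.le)
    have hzn := hξ₁nn z hzb
    rw [Real.norm_eq_abs, abs_of_nonneg (hfnn z hzb)]
    simp only [hfdef, hCdef]
    nlinarith
  have hint0 : MeasureTheory.IntegrableOn f (Set.Ioc 0 a0) := by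
    have hmeas : MeasureTheory.AEStronglyMeasurable f
        (MeasureTheory.volume.restrict (Set.Ioc (0:ℝ) a0)) :=
      (hfcont.mono (Set.Ioc_subset_Ioc le_rfl ((ha0y.le).trans hy.2))).aestronglyMeasurable
        measurableSet_Ioc
    refine ⟨hmeas, MeasureTheory.HasFiniteIntegral.restrict_of_bounded (C := C)
      measure_Ioc_lt_top ?_⟩
    filter_upwards [MeasureTheory.ae_restrict_mem measurableSet_Ioc] with z hz
    exact hbound z hz
  have hint1 : MeasureTheory.IntegrableOn f (Set.Ioc a0 y) := by
    have : MeasureTheory.IntegrableOn f (Set.Icc a0 y) :=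
      (hfcont.mono (fun x hx => ⟨lt_of_lt_of_le ha0pos hx.1, hx.2.trans hy.2⟩)).integrableOn_compact
        isCompact_Icc
    exact this.mono_set Set.Ioc_subset_Icc_self
  have hunion : Set.Ioc (0:ℝ) a0 ∪ Set.Ioc a0 y = Set.Ioc (0:ℝ) y :=
    Set.Ioc_union_Ioc_eq_Ioc ha0pos.le ha0y.le
  have hint : MeasureTheory.IntegrableOn f (Set.Ioc 0 y) := by
    rw [← hunion]; exact hint0.union hint1
  -- small piece bound
  have hsmall : ∀ a ∈ Set.Ioc (0:ℝ) a0, ∫ z in Set.Ioc (0:ℝ) a, f z ≤ C * a := by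
    intro a ha
    have hsubs : Set.Ioc (0:ℝ) a ⊆ Set.Ioc (0:ℝ) a0 := Set.Ioc_subset_Ioc le_rfl ha.2
    calc ∫ z in Set.Ioc (0:ℝ) a, f z ≤ ‖∫ z in Set.Ioc (0:ℝ) a, f z‖ := le_abs_self _
    _ ≤ C * (MeasureTheory.volume (Set.Ioc (0:ℝ) a)).toReal := by
        apply MeasureTheory.norm_setIntegral_le_of_norm_le_const measure_Ioc_lt_top
        · exact fun z hz => hbound z (hsubs hz)
    _ = C * a := by rw [Real.volume_Ioc]; simp [ha.1.le]
  -- main integral bound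
  have hI : ∫ z in Set.Ioc (0:ℝ) y, f z ≤ Dξ₁ y / c := by
    apply le_of_forall_pos_le_add
    intro ε hε
    set a : ℝ := min a0 (ε / (C + 1)) with hadef
    have hapos : 0 < a := lt_min ha0pos (by positivity)
    have haa0 : a ≤ a0 := min_le_left _ _
    have hsplit2 : ∫ z in Set.Ioc (0:ℝ) y, f z
        = (∫ z in Set.Ioc (0:ℝ) a, f z) + ∫ z in Set.Ioc a y, f z := by
      rw [← MeasureTheory.setIntegral_union]
      · rw [Set.Ioc_union_Ioc_eq_Ioc hapos.le (haa0.trans ha0y.le)]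
      · exact Set.Ioc_disjoint_Ioc_of_le le_rfl
      · exact measurableSet_Ioc
      · exact hint0.mono_set (Set.Ioc_subset_Ioc le_rfl haa0)
      · exact hint.mono_set (Set.Ioc_subset_Ioc hapos.le le_rfl)
    have h1 : ∫ z in Set.Ioc (0:ℝ) a, f z ≤ C * a := hsmall a ⟨hapos, haa0⟩
    have h2 : ∫ z in Set.Ioc a y, f z ≤ Dξ₁ y / c := by
      have := key a ⟨hapos, (haa0.trans ha0y.le)⟩
      rwa [intervalIntegral.integral_of_le ((haa0.trans ha0y.le))] at this
    have h3 : C * a ≤ ε := by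
      have hle : a ≤ ε / (C + 1) := min_le_right _ _
      have : C * a ≤ C * (ε / (C + 1)) := mul_le_mul_of_nonneg_left hle hCnn
      have h4 : C * (ε / (C + 1)) ≤ ε := by
        rw [mul_div_assoc']
        rw [div_le_iff₀ (by linarith)]
        nlinarith
      linarith
    linarith
  -- conclude
  have hIval : ∫ z in (0:ℝ)..y, ξ₁ z * (2 * lamt z) ≤ Dξ₁ y / c := by
    rw [intervalIntegral.integral_of_le hy.1.le]
    exact hI
  have hstep : ξ₂ y * (∫ z in (0:ℝ)..y, ξ₁ z * (2 * lamt z)) ≤ ξ₂ y * (Dξ₁ y / c) :=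
    mul_le_mul_of_nonneg_left hIval (hξ₂nn y hy)
  have hfinal : ξ₂ y * (Dξ₁ y / c) ≤ W / c := by
    rw [mul_div_assoc']
    apply (div_le_div_iff_of_pos_right hcpos).mpr
    have hWy := hWr y hy
    nlinarith [hDξ₂np y hy, hξ₁nn y hy]
  exact hstep.trans hfinal
end

section
/- Define g̃(y) = (1/W)·[ ξ₂(y)·∫₀^y ξ₁(z)·G(z)·2λ̃(z) dz + ξ₁(y)·∫_y^{b₀} ξ₂(z)·G(z)·2λ̃(z) dz ] for y ∈ (0, b₀]. Then lim_{y→0⁺} g̃(y) = 0. -/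
open Filter Topology intervalIntegral

open MeasureTheory

set_option maxHeartbeats 1000000

lemma myIntOn {f : ℝ → ℝ} {a b C : ℝ} (hf : ContinuousOn f (Set.Ioc a b))
    (hC : ∀ x ∈ Set.Ioc a b, |f x| ≤ C) :
    MeasureTheory.IntegrableOn f (Set.Ioc a b) := by
  refine ⟨hf.aestronglyMeasurable measurableSet_Ioc, ?_⟩
  refine MeasureTheory.HasFiniteIntegral.restrict_of_bounded (C := C) measure_Ioc_lt_top ?_
  filter_upwards [MeasureTheory.ae_restrict_mem measurableSet_Ioc] with x hx
  simpa using hC x hx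

/-- the function g̃ built by the variation-of-constants formula
satisfies lim_{y→0⁺} g̃(y) = 0. -/
theorem gt_tendsto_zero
    (b0 μ : ℝ) (hb0 : 0 < b0) (hμ : 0 < μ) (n : ℤ) (hn : n ≠ 0)
    (lamt : ℝ → ℝ)
    (hlamt_cont : ContinuousOn lamt (Set.Ioc 0 b0))
    (hlamt_pos : ∀ y ∈ Set.Ioc (0:ℝ) b0, 0 < lamt y)
    (hlamt_lim : Tendsto lamt (𝓝[>] (0:ℝ)) (𝓝 0))
    (G : ℝ → ℝ) (hG : ContinuousOn G (Set.Icc 0 b0))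
    (ξ₁ ξ₂ Dξ₁ Dξ₂ : ℝ → ℝ)
    (hξ₁nn : ∀ y ∈ Set.Ioc (0:ℝ) b0, 0 ≤ ξ₁ y)
    (hξ₂nn : ∀ y ∈ Set.Ioc (0:ℝ) b0, 0 ≤ ξ₂ y)
    (hξ₁d : ∀ y ∈ Set.Ioc (0:ℝ) b0,
      HasDerivWithinAt ξ₁ (lamt y * Dξ₁ y) (Set.Ioc 0 b0) y)
    (hDξ₁d : ∀ y ∈ Set.Ioc (0:ℝ) b0,
      HasDerivWithinAt Dξ₁ (2 * lamt y * ((μ + (n:ℝ)^2 / (lamt y)^2) * ξ₁ y))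
        (Set.Ioc 0 b0) y)
    (hξ₂d : ∀ y ∈ Set.Ioc (0:ℝ) b0,
      HasDerivWithinAt ξ₂ (lamt y * Dξ₂ y) (Set.Ioc 0 b0) y)
    (hDξ₂d : ∀ y ∈ Set.Ioc (0:ℝ) b0,
      HasDerivWithinAt Dξ₂ (2 * lamt y * ((μ + (n:ℝ)^2 / (lamt y)^2) * ξ₂ y))
        (Set.Ioc 0 b0) y)
    (hξ₁mono : MonotoneOn ξ₁ (Set.Ioc 0 b0))
    (hξ₁lim : Tendsto ξ₁ (𝓝[>] (0:ℝ)) (𝓝 0))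
    (hξ₂anti : AntitoneOn ξ₂ (Set.Ioc 0 b0))
    (hξ₂b0 : ξ₂ b0 = 0)
    (hDξ₁mono : MonotoneOn Dξ₁ (Set.Ioc 0 b0))
    (hDξ₂mono : MonotoneOn Dξ₂ (Set.Ioc 0 b0))
    (hDξ₁lim : Tendsto Dξ₁ (𝓝[>] (0:ℝ)) (𝓝 0))
    (hDξ₂b0 : Dξ₂ b0 < 0)
    (W : ℝ) (hW : 0 < W)
    (hWr : ∀ y ∈ Set.Ioc (0:ℝ) b0, Dξ₁ y * ξ₂ y - Dξ₂ y * ξ₁ y = W)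
    (gt : ℝ → ℝ)
    (hgt : ∀ y : ℝ, gt y = (1 / W) *
      (ξ₂ y * (∫ z in (0:ℝ)..y, ξ₁ z * G z * (2 * lamt z)) +
       ξ₁ y * (∫ z in y..b0, ξ₂ z * G z * (2 * lamt z)))) :
    Tendsto gt (𝓝[>] (0:ℝ)) (𝓝 0) := by
  have hb0S : b0 ∈ Set.Ioc (0:ℝ) b0 := ⟨hb0, le_refl _⟩
  -- continuity
  have hξ₁c : ContinuousOn ξ₁ (Set.Ioc 0 b0) := fun y hy => (hξ₁d y hy).continuousWithinAt
  have hξ₂c : ContinuousOn ξ₂ (Set.Ioc 0 b0) := fun y hy => (hξ₂d y hy).continuousWithinAt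
  have hDξ₁c : ContinuousOn Dξ₁ (Set.Ioc 0 b0) := fun y hy => (hDξ₁d y hy).continuousWithinAt
  have hDξ₂c : ContinuousOn Dξ₂ (Set.Ioc 0 b0) := fun y hy => (hDξ₂d y hy).continuousWithinAt
  -- n² ≥ 1
  have hn2 : (1:ℝ) ≤ (n:ℝ)^2 := by
    have h1 : (1:ℤ) ≤ |n| := Int.one_le_abs hn
    have : (1:ℤ) ≤ n^2 := by nlinarith [sq_abs n]
    exact_mod_cast this
  -- bound on G
  obtain ⟨M, hM⟩ := (isCompact_Icc (a := (0:ℝ)) (b := b0)).exists_bound_of_continuousOn hG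
  have hM0 : 0 ≤ M := le_trans (norm_nonneg _) (hM 0 ⟨le_refl 0, hb0.le⟩)
  have hMabs : ∀ z ∈ Set.Ioc (0:ℝ) b0, |G z| ≤ M := fun z hz =>
    hM z ⟨hz.1.le, hz.2⟩
  -- Dξ₁ ≥ 0
  have hDξ₁nn : ∀ y ∈ Set.Ioc (0:ℝ) b0, 0 ≤ Dξ₁ y := by
    intro y hy
    refine le_of_tendsto hDξ₁lim ?_
    filter_upwards [Ioo_mem_nhdsGT_of_mem (Set.mem_Ico.2 ⟨le_refl 0, hy.1⟩)] with z hz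
    exact hDξ₁mono ⟨hz.1, hz.2.le.trans hy.2⟩ hy hz.2.le
  have hDξ₂le : ∀ y ∈ Set.Ioc (0:ℝ) b0, Dξ₂ y ≤ Dξ₂ b0 := fun y hy =>
    hDξ₂mono hy hb0S hy.2
  -- Wronskian corollaries
  have hW1 : ∀ y ∈ Set.Ioc (0:ℝ) b0, Dξ₁ y * ξ₂ y ≤ W := by
    intro y hy
    have h := hWr y hy
    nlinarith [hξ₁nn y hy, hDξ₂le y hy]
  have hW2 : ∀ y ∈ Set.Ioc (0:ℝ) b0, (-Dξ₂ y) * ξ₁ y ≤ W := by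
    intro y hy
    have h := hWr y hy
    nlinarith [hξ₂nn y hy, hDξ₁nn y hy]
  obtain ⟨B, hB0, hξ₁B⟩ : ∃ B : ℝ, 0 < B ∧ ∀ y ∈ Set.Ioc (0:ℝ) b0, ξ₁ y ≤ B := by
    refine ⟨W / (-Dξ₂ b0), div_pos hW (by linarith), fun y hy => ?_⟩
    rw [le_div_iff₀ (by linarith)]
    calc ξ₁ y * -Dξ₂ b0 ≤ ξ₁ y * -Dξ₂ y := by
          nlinarith [hξ₁nn y hy, hDξ₂le y hy]
      _ ≤ W := by nlinarith [hW2 y hy]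
  rw [NormedAddCommGroup.tendsto_nhds_zero]
  intro ε₀ hε₀
  obtain ⟨ε, hε, hε1, hεM⟩ : ∃ ε : ℝ, 0 < ε ∧ ε ≤ 1 ∧ 2*(M*ε^2) ≤ ε₀/2 := by
    refine ⟨min 1 (ε₀ / (4*(M+1))), lt_min one_pos (by positivity), min_le_left _ _, ?_⟩
    set ε := min 1 (ε₀ / (4*(M+1))) with hεdef
    have hε : 0 < ε := lt_min one_pos (by positivity)
    have hε1 : ε ≤ 1 := min_le_left _ _
    have h2 : ε ≤ ε₀/(4*(M+1)) := min_le_right _ _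
    have h3 : ε^2 ≤ ε := by nlinarith
    have h4 : M*ε^2 ≤ M*ε := by nlinarith
    have h5 : M*ε ≤ M*(ε₀/(4*(M+1))) := by nlinarith
    have h6 : M*(ε₀/(4*(M+1))) ≤ ε₀/4 := by
      rw [mul_div_assoc']
      rw [div_le_div_iff₀ (by positivity) (by norm_num)]
      nlinarith
    linarith
  -- choose δ such that lamt ≤ ε on (0, δ], δ < b0
  have hev : ∀ᶠ z in 𝓝[>] (0:ℝ), lamt z < ε :=
    hlamt_lim.eventually (tendsto_id.eventually_lt_const hε)
  obtain ⟨δ, hδ0, hδb, hlam_le⟩ : ∃ δ : ℝ, 0 < δ ∧ δ < b0 ∧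
      ∀ z ∈ Set.Ioc (0:ℝ) δ, lamt z ≤ ε := by
    obtain ⟨δ', hδ'0, hδ'⟩ := mem_nhdsGT_iff_exists_Ioc_subset.1 hev
    refine ⟨min δ' (b0/2), lt_min hδ'0 (by linarith),
      lt_of_le_of_lt (min_le_right _ _) (by linarith), fun z hz => ?_⟩
    exact le_of_lt (hδ' ⟨hz.1, hz.2.trans (min_le_left _ _)⟩)
  have hδS : δ ∈ Set.Ioc (0:ℝ) b0 := ⟨hδ0, hδb.le⟩
  -- the comparison/FTC lemma
  have hcomp : ∀ (ξ Dξ : ℝ → ℝ),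
      (∀ u ∈ Set.Ioc (0:ℝ) b0, HasDerivWithinAt Dξ
        (2 * lamt u * ((μ + (n:ℝ)^2 / (lamt u)^2) * ξ u)) (Set.Ioc 0 b0) u) →
      ContinuousOn ξ (Set.Ioc 0 b0) →
      (∀ u ∈ Set.Ioc (0:ℝ) b0, 0 ≤ ξ u) →
      ∀ a c, 0 < a → a ≤ c → c ≤ δ →
      (∫ z in a..c, ξ z * (2*lamt z)) ≤ ε^2 * (Dξ c - Dξ a) := by
    intro ξ Dξ hd hc hnn a c ha hac hcδ
    have hIccsub : Set.Icc a c ⊆ Set.Ioc (0:ℝ) b0 := fun u hu =>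
      ⟨lt_of_lt_of_le ha hu.1, le_trans hu.2 (le_trans hcδ hδb.le)⟩
    have hIccδ : Set.Icc a c ⊆ Set.Ioc (0:ℝ) δ := fun u hu =>
      ⟨lt_of_lt_of_le ha hu.1, hu.2.trans hcδ⟩
    have hlamc : ContinuousOn lamt (Set.Icc a c) := hlamt_cont.mono hIccsub
    have hlamne : ∀ u ∈ Set.Icc a c, (lamt u)^2 ≠ 0 := fun u hu =>
      pow_ne_zero 2 (hlamt_pos u (hIccsub hu)).ne'
    have hderivc : ContinuousOn
        (fun u => 2 * lamt u * ((μ + (n:ℝ)^2 / (lamt u)^2) * ξ u)) (Set.Icc a c) :=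
      (continuousOn_const.mul hlamc).mul
        ((continuousOn_const.add (continuousOn_const.div (hlamc.pow 2) hlamne)).mul
          (hc.mono hIccsub))
    have hderii : IntervalIntegrable
        (fun u => 2 * lamt u * ((μ + (n:ℝ)^2 / (lamt u)^2) * ξ u)) volume a c := by
      apply ContinuousOn.intervalIntegrable; rwa [Set.uIcc_of_le hac]
    have hgi : IntervalIntegrable (fun z => ξ z * (2*lamt z)) volume a c := by
      apply ContinuousOn.intervalIntegrable
      rw [Set.uIcc_of_le hac]
      exact (hc.mono hIccsub).mul (continuousOn_const.mul hlamc)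
    have hFTC : ∫ u in a..c, 2 * lamt u * ((μ + (n:ℝ)^2 / (lamt u)^2) * ξ u)
        = Dξ c - Dξ a := by
      refine integral_eq_sub_of_hasDerivAt (fun u hu => ?_) hderii
      rw [Set.uIcc_of_le hac] at hu
      have huS := hIccsub hu
      have hmem : Set.Ioc (0:ℝ) b0 ∈ 𝓝 u :=
        mem_of_superset (Ioo_mem_nhds huS.1 (lt_of_le_of_lt (hu.2.trans hcδ) hδb))
          Set.Ioo_subset_Ioc_self
      exact (hd u huS).hasDerivAt hmem
    calc (∫ z in a..c, ξ z * (2*lamt z))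
        ≤ ∫ z in a..c, ε^2 * (2 * lamt z * ((μ + (n:ℝ)^2 / (lamt z)^2) * ξ z)) := by
          refine integral_mono_on hac hgi (hderii.const_mul _) (fun z hz => ?_)
          have hzS := hIccsub hz
          have hl := hlamt_pos z hzS
          have hle : lamt z ≤ ε := hlam_le z (hIccδ hz)
          have hξ := hnn z hzS
          have hkey : (1:ℝ) ≤ ε^2 * (μ + (n:ℝ)^2/(lamt z)^2) := by
            have h1 : (1:ℝ) ≤ ε^2 * ((n:ℝ)^2/(lamt z)^2) := by
              rw [← mul_div_assoc, le_div_iff₀ (by positivity)]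
              nlinarith
            nlinarith [sq_nonneg ε]
          have hP : (0:ℝ) ≤ 2 * lamt z * ξ z := by positivity
          nlinarith [mul_le_mul_of_nonneg_right hkey hP]
      _ = ε^2 * (Dξ c - Dξ a) := by rw [intervalIntegral.integral_const_mul, hFTC]
  -- the tail integral constant
  set K := |∫ z in δ..b0, ξ₂ z * G z * (2 * lamt z)| with hKdef
  have hK0 : 0 ≤ K := abs_nonneg _
  clear_value K
  obtain ⟨c, hc, hcK⟩ : ∃ c : ℝ, 0 < c ∧ c * (K+1) ≤ ε₀ * W / 2 := by
    refine ⟨ε₀ * W / (2*(K+1)), by positivity, le_of_eq ?_⟩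
    field_simp
  obtain ⟨C', hC'0, hC'B⟩ : ∃ C' : ℝ, 0 ≤ C' ∧ B * M * (2*ε) ≤ C' :=
    ⟨B * M * (2*ε), by positivity, le_refl _⟩
  filter_upwards [Ioo_mem_nhdsGT_of_mem (Set.mem_Ico.2 ⟨le_refl (0:ℝ), hδ0⟩),
    hξ₁lim.eventually (tendsto_id.eventually_lt_const hc)] with y hyδ hy2
  have hy0 : 0 < y := hyδ.1
  have hyδ2 : y < δ := hyδ.2
  have hyb : y < b0 := hyδ2.trans hδb
  have hyS : y ∈ Set.Ioc (0:ℝ) b0 := ⟨hy0, hyb.le⟩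
  have hsub1 : Set.Ioc (0:ℝ) y ⊆ Set.Ioc 0 b0 := Set.Ioc_subset_Ioc_right hyb.le
  have hsub1' : Set.Ioc (0:ℝ) y ⊆ Set.Icc 0 b0 := fun z hz =>
    ⟨hz.1.le, hz.2.trans hyb.le⟩
  have hsub1δ : Set.Ioc (0:ℝ) y ⊆ Set.Ioc 0 δ := Set.Ioc_subset_Ioc_right hyδ2.le
  -- bound A on the first integral
  have hfbd : ∀ z ∈ Set.Ioc (0:ℝ) y, |ξ₁ z * G z * (2 * lamt z)| ≤ C' := by
    intro z hz
    have hz1 := hsub1 hz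
    have hzδ := hsub1δ hz
    have hl0 := (hlamt_pos z hz1).le
    rw [abs_mul, abs_mul, abs_of_nonneg (hξ₁nn z hz1),
      abs_of_nonneg (by linarith : (0:ℝ) ≤ 2 * lamt z)]
    have l1 : ξ₁ z * |G z| ≤ B * M :=
      mul_le_mul (hξ₁B z hz1) (hMabs z hz1) (abs_nonneg _) hB0.le
    have l2 : 2 * lamt z ≤ 2 * ε := by linarith [hlam_le z hzδ]
    calc ξ₁ z * |G z| * (2 * lamt z) ≤ (B * M) * (2 * ε) :=
          mul_le_mul l1 l2 (by linarith) (by positivity)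
      _ ≤ C' := hC'B
  have hfc : ContinuousOn (fun z => ξ₁ z * G z * (2 * lamt z)) (Set.Ioc 0 y) :=
    ((hξ₁c.mono hsub1).mul (hG.mono hsub1')).mul
      (continuousOn_const.mul (hlamt_cont.mono hsub1))
  have hfint : IntegrableOn (fun z => ξ₁ z * G z * (2 * lamt z)) (Set.Ioc 0 y) volume :=
    myIntOn hfc hfbd
  have hA : |∫ z in (0:ℝ)..y, ξ₁ z * G z * (2 * lamt z)| ≤ M * ε^2 * Dξ₁ y := by
    rw [intervalIntegral.integral_of_le hy0.le]
    have h1 : |∫ z in Set.Ioc (0:ℝ) y, ξ₁ z * G z * (2 * lamt z)|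
        ≤ ∫ z in Set.Ioc (0:ℝ) y, |ξ₁ z * G z * (2 * lamt z)| := by
      have := MeasureTheory.norm_integral_le_integral_norm
          (μ := volume.restrict (Set.Ioc (0:ℝ) y))
          (fun z => ξ₁ z * G z * (2 * lamt z))
      simpa only [Real.norm_eq_abs] using this
    refine h1.trans (le_of_forall_pos_le_add (fun η hη => ?_))
    obtain ⟨a, ha0, hay, haC⟩ : ∃ a : ℝ, 0 < a ∧ a < y ∧ C' * a ≤ η := by
      refine ⟨min (y/2) (η/(C'+1)), lt_min (by linarith) (by positivity),
        lt_of_le_of_lt (min_le_left _ _) (by linarith), ?_⟩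
      have h2 : min (y/2) (η/(C'+1)) ≤ η/(C'+1) := min_le_right _ _
      rw [le_div_iff₀ (by positivity)] at h2
      nlinarith [lt_min (by linarith : (0:ℝ) < y/2) (by positivity : (0:ℝ) < η/(C'+1))]
    have haS : a ∈ Set.Ioc (0:ℝ) b0 := ⟨ha0, by linarith⟩
    have hsa : Set.Ioc (0:ℝ) a ⊆ Set.Ioc 0 y := Set.Ioc_subset_Ioc_right hay.le
    have hsay : Set.Ioc a y ⊆ Set.Ioc 0 y := Set.Ioc_subset_Ioc_left ha0.le
    have hb1 : ∫ z in Set.Ioc (0:ℝ) a, |ξ₁ z * G z * (2 * lamt z)| ≤ C' * a := by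
      have hmono : ∀ z ∈ Set.Ioc (0:ℝ) a, |ξ₁ z * G z * (2 * lamt z)| ≤ C' :=
        fun z hz => hfbd z (hsa hz)
      calc ∫ z in Set.Ioc (0:ℝ) a, |ξ₁ z * G z * (2 * lamt z)|
          ≤ ∫ _z in Set.Ioc (0:ℝ) a, C' :=
            setIntegral_mono_on ((hfint.mono_set hsa).abs)
              (integrableOn_const measure_Ioc_lt_top.ne) measurableSet_Ioc hmono
        _ = C' * a := by
            rw [setIntegral_const, Real.volume_real_Ioc_of_le (by linarith), smul_eq_mul]
            ring
    have hb2 : ∫ z in Set.Ioc a y, |ξ₁ z * G z * (2 * lamt z)|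
        ≤ M * ε^2 * Dξ₁ y := by
      have hgint : IntegrableOn (fun z => M * (ξ₁ z * (2 * lamt z))) (Set.Ioc a y) volume := by
        refine myIntOn (f := fun z => M * (ξ₁ z * (2 * lamt z))) (C := M * (B * (2*ε))) ?_ ?_
        · exact continuousOn_const.mul (((hξ₁c.mono (fun z hz => hsub1 (hsay hz))).mul
            (continuousOn_const.mul (hlamt_cont.mono (fun z hz => hsub1 (hsay hz))))))
        · intro z hz
          have hz1 := hsub1 (hsay hz)
          have hzδ := hsub1δ (hsay hz)
          have hl0 := (hlamt_pos z hz1).le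
          rw [abs_mul, abs_of_nonneg hM0, abs_mul, abs_of_nonneg (hξ₁nn z hz1),
            abs_of_nonneg (by linarith : (0:ℝ) ≤ 2 * lamt z)]
          have : ξ₁ z * (2 * lamt z) ≤ B * (2 * ε) :=
            mul_le_mul (hξ₁B z hz1) (by linarith [hlam_le z hzδ]) (by linarith)
              hB0.le
          nlinarith
      have hptw : ∀ z ∈ Set.Ioc a y, |ξ₁ z * G z * (2 * lamt z)|
          ≤ M * (ξ₁ z * (2 * lamt z)) := by
        intro z hz
        have hz1 := hsub1 (hsay hz)
        have hl0 := (hlamt_pos z hz1).le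
        rw [abs_mul, abs_mul, abs_of_nonneg (hξ₁nn z hz1),
          abs_of_nonneg (by linarith : (0:ℝ) ≤ 2 * lamt z)]
        calc ξ₁ z * |G z| * (2 * lamt z) ≤ ξ₁ z * M * (2 * lamt z) :=
              mul_le_mul_of_nonneg_right
                (mul_le_mul_of_nonneg_left (hMabs z hz1) (hξ₁nn z hz1)) (by linarith)
          _ = M * (ξ₁ z * (2 * lamt z)) := by ring
      calc ∫ z in Set.Ioc a y, |ξ₁ z * G z * (2 * lamt z)|
          ≤ ∫ z in Set.Ioc a y, M * (ξ₁ z * (2 * lamt z)) :=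
            setIntegral_mono_on ((hfint.mono_set hsay).abs) hgint measurableSet_Ioc hptw
        _ = ∫ z in a..y, M * (ξ₁ z * (2 * lamt z)) :=
            (intervalIntegral.integral_of_le hay.le).symm
        _ = M * ∫ z in a..y, ξ₁ z * (2 * lamt z) :=
            intervalIntegral.integral_const_mul _ _
        _ ≤ M * (ε^2 * (Dξ₁ y - Dξ₁ a)) :=
            mul_le_mul_of_nonneg_left
              (hcomp ξ₁ Dξ₁ hDξ₁d hξ₁c hξ₁nn a y ha0 hay.le hyδ2.le) hM0
        _ ≤ M * ε^2 * Dξ₁ y := by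
            nlinarith [mul_nonneg (mul_nonneg hM0 (sq_nonneg ε)) (hDξ₁nn a haS)]
    rw [← Set.Ioc_union_Ioc_eq_Ioc ha0.le hay.le,
      MeasureTheory.setIntegral_union (Set.Ioc_disjoint_Ioc_of_le le_rfl) measurableSet_Ioc
        ((hfint.mono_set hsa).abs) ((hfint.mono_set hsay).abs)]
    linarith
  -- bound B on the second integral
  have hf2c : ContinuousOn (fun z => ξ₂ z * G z * (2 * lamt z)) (Set.Ioc 0 b0) :=
    (hξ₂c.mul (hG.mono Set.Ioc_subset_Icc_self)).mul
      (continuousOn_const.mul hlamt_cont)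
  have hi1 : IntervalIntegrable (fun z => ξ₂ z * G z * (2 * lamt z)) volume y δ := by
    apply ContinuousOn.intervalIntegrable
    rw [Set.uIcc_of_le hyδ2.le]
    exact hf2c.mono (fun z hz => ⟨lt_of_lt_of_le hy0 hz.1, hz.2.trans hδb.le⟩)
  have hi2 : IntervalIntegrable (fun z => ξ₂ z * G z * (2 * lamt z)) volume δ b0 := by
    apply ContinuousOn.intervalIntegrable
    rw [Set.uIcc_of_le hδb.le]
    exact hf2c.mono (fun z hz => ⟨lt_of_lt_of_le hδ0 hz.1, hz.2⟩)
  have hB2 : |∫ z in y..b0, ξ₂ z * G z * (2 * lamt z)| ≤ M * ε^2 * (-Dξ₂ y) + K := by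
    rw [← integral_add_adjacent_intervals hi1 hi2]
    refine (abs_add_le _ _).trans ?_
    have hfirst : |∫ z in y..δ, ξ₂ z * G z * (2 * lamt z)| ≤ M * ε^2 * (-Dξ₂ y) := by
      have hIyδ : Set.Icc y δ ⊆ Set.Ioc (0:ℝ) b0 :=
        fun z hz => ⟨lt_of_lt_of_le hy0 hz.1, hz.2.trans hδb.le⟩
      have hgi2 : IntervalIntegrable (fun z => M * (ξ₂ z * (2 * lamt z))) volume y δ := by
        apply ContinuousOn.intervalIntegrable
        rw [Set.uIcc_of_le hyδ2.le]
        exact continuousOn_const.mul ((hξ₂c.mono hIyδ).mul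
          (continuousOn_const.mul (hlamt_cont.mono hIyδ)))
      have hptw : ∀ z ∈ Set.Icc y δ, |ξ₂ z * G z * (2 * lamt z)|
          ≤ M * (ξ₂ z * (2 * lamt z)) := by
        intro z hz
        have hz1 := hIyδ hz
        have hl0 := (hlamt_pos z hz1).le
        rw [abs_mul, abs_mul, abs_of_nonneg (hξ₂nn z hz1),
          abs_of_nonneg (by linarith : (0:ℝ) ≤ 2 * lamt z)]
        calc ξ₂ z * |G z| * (2 * lamt z) ≤ ξ₂ z * M * (2 * lamt z) :=
              mul_le_mul_of_nonneg_right
                (mul_le_mul_of_nonneg_left (hMabs z hz1) (hξ₂nn z hz1)) (by linarith)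
          _ = M * (ξ₂ z * (2 * lamt z)) := by ring
      calc |∫ z in y..δ, ξ₂ z * G z * (2 * lamt z)|
          ≤ ∫ z in y..δ, |ξ₂ z * G z * (2 * lamt z)| :=
            intervalIntegral.abs_integral_le_integral_abs hyδ2.le
        _ ≤ ∫ z in y..δ, M * (ξ₂ z * (2 * lamt z)) :=
            integral_mono_on hyδ2.le hi1.abs hgi2 hptw
        _ = M * ∫ z in y..δ, ξ₂ z * (2 * lamt z) :=
            intervalIntegral.integral_const_mul _ _
        _ ≤ M * (ε^2 * (Dξ₂ δ - Dξ₂ y)) :=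
            mul_le_mul_of_nonneg_left
              (hcomp ξ₂ Dξ₂ hDξ₂d hξ₂c hξ₂nn y δ hy0 hyδ2.le (le_refl δ)) hM0
        _ ≤ M * ε^2 * (-Dξ₂ y) := by
            have hDδ : Dξ₂ δ ≤ 0 := le_trans (hDξ₂le δ hδS) hDξ₂b0.le
            nlinarith [mul_nonneg hM0 (sq_nonneg ε), hDδ]
    rw [← hKdef]
    linarith [hfirst]
  -- final combination
  have hξ₁0 := hξ₁nn y hyS
  have hξ₂0 := hξ₂nn y hyS
  have habs : ‖gt y‖ = (1/W) *
      |ξ₂ y * (∫ z in (0:ℝ)..y, ξ₁ z * G z * (2 * lamt z)) +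
       ξ₁ y * (∫ z in y..b0, ξ₂ z * G z * (2 * lamt z))| := by
    rw [hgt y, Real.norm_eq_abs, abs_mul, abs_of_pos (by positivity : (0:ℝ) < 1/W)]
  have h7 : |ξ₂ y * (∫ z in (0:ℝ)..y, ξ₁ z * G z * (2 * lamt z)) +
       ξ₁ y * (∫ z in y..b0, ξ₂ z * G z * (2 * lamt z))|
      ≤ ξ₂ y * (M * ε^2 * Dξ₁ y) + ξ₁ y * (M * ε^2 * (-Dξ₂ y) + K) := by
    refine (abs_add_le _ _).trans ?_
    rw [abs_mul, abs_mul, abs_of_nonneg hξ₂0, abs_of_nonneg hξ₁0]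
    exact add_le_add (mul_le_mul_of_nonneg_left hA hξ₂0)
      (mul_le_mul_of_nonneg_left hB2 hξ₁0)
  have h8 : ξ₂ y * (M * ε^2 * Dξ₁ y) ≤ M * ε^2 * W := by
    have := hW1 y hyS
    nlinarith [sq_nonneg ε, hM0, mul_nonneg hM0 (sq_nonneg ε)]
  have h9 : ξ₁ y * (M * ε^2 * (-Dξ₂ y) + K) ≤ M * ε^2 * W + ξ₁ y * K := by
    have := hW2 y hyS
    nlinarith [mul_nonneg hM0 (sq_nonneg ε)]
  have h10 : ξ₁ y * K < ε₀ * W / 2 := by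
    have h11 : ξ₁ y * K ≤ ξ₁ y * (K+1) := by nlinarith
    have h12 : ξ₁ y * (K+1) < c * (K+1) :=
      mul_lt_mul_of_pos_right hy2 (by linarith)
    linarith
  rw [habs]
  have hXlt : |ξ₂ y * (∫ z in (0:ℝ)..y, ξ₁ z * G z * (2 * lamt z)) +
       ξ₁ y * (∫ z in y..b0, ξ₂ z * G z * (2 * lamt z))| < ε₀ * W := by
    have h14 : 2 * (M*ε^2) * W ≤ (ε₀/2) * W := by nlinarith
    nlinarith [h7, h8, h9, h10]
  rw [one_div, inv_mul_lt_iff₀ hW]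
  linarith [hXlt]
end

section
/- Define g̃(y) = (1/W)·[ ξ₂(y)·∫₀^y ξ₁(z)·G(z)·2λ̃(z) dz + ξ₁(y)·∫_y^{b₀} ξ₂(z)·G(z)·2λ̃(z) dz ] for y ∈ (0, b₀]. Then its generalized derivative satisfies D_ũ g̃(y) = (1/W)·[ D_ũξ₁(y)·∫_y^{b₀} ξ₂(z)·G(z)·2λ̃(z) dz + D_ũξ₂(y)·∫₀^y ξ₁(z)·G(z)·2λ̃(z) dz ], and lim_{y→0⁺} D_ũ g̃(y) = 0. -/
open Filter Topology intervalIntegral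

/-- the generalized derivative of g̃ is given by
D_ũg̃(y) = (1/W)·[D_ũξ₁(y)·∫_y^{b₀} ξ₂ G 2λ̃ + D_ũξ₂(y)·∫₀^y ξ₁ G 2λ̃]
(encoded by g̃′(y) = λ̃(y)·D_ũg̃(y) on (0,b₀)), and lim_{y→0⁺} D_ũg̃(y) = 0. -/
theorem Dgt_formula_and_limit
    (b0 μ : ℝ) (hb0 : 0 < b0) (hμ : 0 < μ) (n : ℤ) (hn : n ≠ 0)
    (lamt : ℝ → ℝ)
    (hlamt_cont : ContinuousOn lamt (Set.Ioc 0 b0))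
    (hlamt_pos : ∀ y ∈ Set.Ioc (0:ℝ) b0, 0 < lamt y)
    (hlamt_lim : Tendsto lamt (𝓝[>] (0:ℝ)) (𝓝 0))
    (G : ℝ → ℝ) (hG : ContinuousOn G (Set.Icc 0 b0))
    (ξ₁ ξ₂ Dξ₁ Dξ₂ : ℝ → ℝ)
    (hξ₁nn : ∀ y ∈ Set.Ioc (0:ℝ) b0, 0 ≤ ξ₁ y)
    (hξ₂nn : ∀ y ∈ Set.Ioc (0:ℝ) b0, 0 ≤ ξ₂ y)
    (hξ₁d : ∀ y ∈ Set.Ioc (0:ℝ) b0,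
      HasDerivWithinAt ξ₁ (lamt y * Dξ₁ y) (Set.Ioc 0 b0) y)
    (hDξ₁d : ∀ y ∈ Set.Ioc (0:ℝ) b0,
      HasDerivWithinAt Dξ₁ (2 * lamt y * ((μ + (n:ℝ)^2 / (lamt y)^2) * ξ₁ y))
        (Set.Ioc 0 b0) y)
    (hξ₂d : ∀ y ∈ Set.Ioc (0:ℝ) b0,
      HasDerivWithinAt ξ₂ (lamt y * Dξ₂ y) (Set.Ioc 0 b0) y)
    (hDξ₂d : ∀ y ∈ Set.Ioc (0:ℝ) b0,
      HasDerivWithinAt Dξ₂ (2 * lamt y * ((μ + (n:ℝ)^2 / (lamt y)^2) * ξ₂ y))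
        (Set.Ioc 0 b0) y)
    (hξ₁mono : MonotoneOn ξ₁ (Set.Ioc 0 b0))
    (hξ₁lim : Tendsto ξ₁ (𝓝[>] (0:ℝ)) (𝓝 0))
    (hξ₂anti : AntitoneOn ξ₂ (Set.Ioc 0 b0))
    (hξ₂b0 : ξ₂ b0 = 0)
    (hDξ₁mono : MonotoneOn Dξ₁ (Set.Ioc 0 b0))
    (hDξ₂mono : MonotoneOn Dξ₂ (Set.Ioc 0 b0))
    (hDξ₁lim : Tendsto Dξ₁ (𝓝[>] (0:ℝ)) (𝓝 0))
    (hDξ₂b0 : Dξ₂ b0 < 0)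
    (W : ℝ) (hW : 0 < W)
    (hWr : ∀ y ∈ Set.Ioc (0:ℝ) b0, Dξ₁ y * ξ₂ y - Dξ₂ y * ξ₁ y = W)
    (gt : ℝ → ℝ)
    (hgt : ∀ y : ℝ, gt y = (1 / W) *
      (ξ₂ y * (∫ z in (0:ℝ)..y, ξ₁ z * G z * (2 * lamt z)) +
       ξ₁ y * (∫ z in y..b0, ξ₂ z * G z * (2 * lamt z))))
    (Dgt : ℝ → ℝ)
    (hDgt : ∀ y : ℝ, Dgt y = (1 / W) *
      (Dξ₁ y * (∫ z in y..b0, ξ₂ z * G z * (2 * lamt z)) +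
       Dξ₂ y * (∫ z in (0:ℝ)..y, ξ₁ z * G z * (2 * lamt z)))) :
    (∀ y ∈ Set.Ioo (0:ℝ) b0, HasDerivAt gt (lamt y * Dgt y) y) ∧
    Tendsto Dgt (𝓝[>] (0:ℝ)) (𝓝 0) := by
  have hb0mem : b0 ∈ Set.Ioc (0:ℝ) b0 := ⟨hb0, le_rfl⟩
  set f₁ : ℝ → ℝ := fun z => ξ₁ z * G z * (2 * lamt z) with hf₁def
  set f₂ : ℝ → ℝ := fun z => ξ₂ z * G z * (2 * lamt z) with hf₂def
  -- continuity facts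
  have hξ₁cont : ContinuousOn ξ₁ (Set.Ioc 0 b0) :=
    fun y hy => (hξ₁d y hy).continuousWithinAt
  have hξ₂cont : ContinuousOn ξ₂ (Set.Ioc 0 b0) :=
    fun y hy => (hξ₂d y hy).continuousWithinAt
  have hf₁cont : ContinuousOn f₁ (Set.Ioc 0 b0) :=
    (hξ₁cont.mul (hG.mono Set.Ioc_subset_Icc_self)).mul
      (continuousOn_const.mul hlamt_cont)
  have hf₂cont : ContinuousOn f₂ (Set.Ioc 0 b0) :=
    (hξ₂cont.mul (hG.mono Set.Ioc_subset_Icc_self)).mul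
      (continuousOn_const.mul hlamt_cont)
  -- bound on G
  obtain ⟨M₀, hM₀⟩ := (isCompact_Icc : IsCompact (Set.Icc (0:ℝ) b0)).exists_bound_of_continuousOn hG
  set M : ℝ := max M₀ 0 with hMdef
  have hMnn : 0 ≤ M := le_max_right _ _
  have hM : ∀ z ∈ Set.Icc (0:ℝ) b0, |G z| ≤ M := fun z hz =>
    le_trans (hM₀ z hz) (le_max_left _ _)
  -- lamt ≤ 1 near 0
  obtain ⟨δ₀, hδ₀pos, hδ₀⟩ := (Metric.tendsto_nhdsWithin_nhds.1 hlamt_lim) 1 one_pos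
  set δ₂ : ℝ := min (δ₀ / 2) b0 with hδ₂def
  have hδ₂pos : 0 < δ₂ := lt_min (by linarith) hb0
  have hδ₂b0 : δ₂ ≤ b0 := min_le_right _ _
  have hlam1 : ∀ z ∈ Set.Ioc (0:ℝ) δ₂, lamt z ≤ 1 := by
    intro z hz
    have hd : dist z (0:ℝ) < δ₀ := by
      rw [Real.dist_eq, sub_zero, abs_of_pos hz.1]
      have := hz.2
      have : z ≤ δ₀ / 2 := le_trans this (min_le_left _ _)
      linarith
    have := hδ₀ (Set.mem_Ioi.2 hz.1) hd
    rw [Real.dist_eq, sub_zero] at this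
    calc lamt z ≤ |lamt z| := le_abs_self _
    _ ≤ 1 := this.le
  -- global bound on lamt
  obtain ⟨L₀, hL₀⟩ := (isCompact_Icc : IsCompact (Set.Icc δ₂ b0)).exists_bound_of_continuousOn
    (hlamt_cont.mono (fun z hz => ⟨lt_of_lt_of_le hδ₂pos hz.1, hz.2⟩))
  set L : ℝ := max L₀ 1 with hLdef
  have hL : ∀ z ∈ Set.Ioc (0:ℝ) b0, |lamt z| ≤ L := by
    intro z hz
    rcases le_or_gt z δ₂ with h | h
    · rw [abs_of_pos (hlamt_pos z hz)]
      exact le_trans (hlam1 z ⟨hz.1, h⟩) (le_max_right _ _)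
    · exact le_trans (hL₀ z ⟨h.le, hz.2⟩) (le_max_left _ _)
  -- sign facts
  have hDξ₁nn : ∀ y ∈ Set.Ioc (0:ℝ) b0, 0 ≤ Dξ₁ y := by
    intro y hy
    refine le_of_tendsto hDξ₁lim ?_
    filter_upwards [Ioo_mem_nhdsGT_of_mem (Set.mem_Ico.2 ⟨le_rfl, hy.1⟩)] with t ht
    exact hDξ₁mono ⟨ht.1, le_trans ht.2.le hy.2⟩ hy ht.2.le
  have hDξ₂neg : ∀ y ∈ Set.Ioc (0:ℝ) b0, Dξ₂ y < 0 := fun y hy =>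
    lt_of_le_of_lt (hDξ₂mono hy hb0mem hy.2) hDξ₂b0
  have key1 : ∀ z ∈ Set.Ioc (0:ℝ) b0, Dξ₁ z * ξ₂ z ≤ W := by
    intro z hz
    have h1 := hWr z hz
    have h2 : Dξ₂ z * ξ₁ z ≤ 0 :=
      mul_nonpos_of_nonpos_of_nonneg (hDξ₂neg z hz).le (hξ₁nn z hz)
    linarith
  have key2 : ∀ z ∈ Set.Ioc (0:ℝ) b0, -Dξ₂ z * ξ₁ z ≤ W := by
    intro z hz
    have h1 := hWr z hz
    have h2 : 0 ≤ Dξ₁ z * ξ₂ z := mul_nonneg (hDξ₁nn z hz) (hξ₂nn z hz)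
    linarith
  -- interval integrability of f₁ from 0
  have hf₁int : ∀ y ∈ Set.Ioc (0:ℝ) b0, IntervalIntegrable f₁ MeasureTheory.volume 0 y := by
    intro y hy
    rw [intervalIntegrable_iff, Set.uIoc_of_le hy.1.le]
    refine MeasureTheory.Integrable.mono' (g := fun _ => ξ₁ b0 * M * (2 * L))
      (MeasureTheory.integrableOn_const measure_Ioc_lt_top.ne)
      ((hf₁cont.mono (Set.Ioc_subset_Ioc_right hy.2)).aestronglyMeasurable
        measurableSet_Ioc) ?_
    filter_upwards [MeasureTheory.ae_restrict_mem measurableSet_Ioc] with z hz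
    have hzmem : z ∈ Set.Ioc (0:ℝ) b0 := ⟨hz.1, le_trans hz.2 hy.2⟩
    have h1 : 0 ≤ ξ₁ z := hξ₁nn z hzmem
    have h2 : ξ₁ z ≤ ξ₁ b0 := hξ₁mono hzmem hb0mem hzmem.2
    have h3 : |G z| ≤ M := hM z ⟨hzmem.1.le, hzmem.2⟩
    have h4 : |lamt z| ≤ L := hL z hzmem
    have h5 : (0:ℝ) ≤ |G z| := abs_nonneg _
    have h6 : (0:ℝ) ≤ |lamt z| := abs_nonneg _
    have : ‖f₁ z‖ = ξ₁ z * |G z| * (2 * |lamt z|) := by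
      rw [hf₁def]
      simp only [Real.norm_eq_abs, abs_mul, abs_of_nonneg h1, abs_of_nonneg (by norm_num : (0:ℝ) ≤ 2)]
    rw [this]
    have c1 : ξ₁ z * |G z| ≤ ξ₁ b0 * M :=
      mul_le_mul h2 h3 h5 (le_trans h1 h2)
    have c2 : 2 * |lamt z| ≤ 2 * L := by linarith
    exact mul_le_mul c1 c2 (by linarith) (mul_nonneg (le_trans h1 h2) hMnn)
  -- interval integrability of f₂ on subintervals of (0, b0]
  have hf₂int : ∀ a ∈ Set.Ioc (0:ℝ) b0, ∀ b ∈ Set.Ioc (0:ℝ) b0, a ≤ b →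
      IntervalIntegrable f₂ MeasureTheory.volume a b := by
    intro a ha b hb hab
    refine (hf₂cont.mono ?_).intervalIntegrable
    rw [Set.uIcc_of_le hab]
    exact fun z hz => ⟨lt_of_lt_of_le ha.1 hz.1, le_trans hz.2 hb.2⟩
  constructor
  · -- derivative part
    intro y hy
    have hyIoc : y ∈ Set.Ioc (0:ℝ) b0 := ⟨hy.1, hy.2.le⟩
    have hnhds : Set.Ioc (0:ℝ) b0 ∈ 𝓝 y := Ioc_mem_nhds hy.1 hy.2
    have hξ₁' : HasDerivAt ξ₁ (lamt y * Dξ₁ y) y := (hξ₁d y hyIoc).hasDerivAt hnhds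
    have hξ₂' : HasDerivAt ξ₂ (lamt y * Dξ₂ y) y := (hξ₂d y hyIoc).hasDerivAt hnhds
    have hA : HasDerivAt (fun u => ∫ z in (0:ℝ)..u, f₁ z) (f₁ y) y := by
      refine intervalIntegral.integral_hasDerivAt_right (hf₁int y hyIoc)
        ⟨Set.Ioc 0 b0, hnhds, hf₁cont.aestronglyMeasurable measurableSet_Ioc⟩
        ((hf₁cont y hyIoc).continuousAt hnhds)
    have hB : HasDerivAt (fun u => ∫ z in u..b0, f₂ z) (-f₂ y) y := by
      refine intervalIntegral.integral_hasDerivAt_left (hf₂int y hyIoc b0 hb0mem hyIoc.2)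
        ⟨Set.Ioc 0 b0, hnhds, hf₂cont.aestronglyMeasurable measurableSet_Ioc⟩
        ((hf₂cont y hyIoc).continuousAt hnhds)
    have hgt' : gt = fun u => (1 / W) *
        (ξ₂ u * (∫ z in (0:ℝ)..u, f₁ z) + ξ₁ u * (∫ z in u..b0, f₂ z)) := funext hgt
    rw [hgt', hDgt y]
    have hD := (((hξ₂'.mul hA).add (hξ₁'.mul hB)).const_mul (1 / W))
    convert hD using 1
    · rfl
    · rfl
    · rfl
    rw [hf₁def, hf₂def]
    ring
  · -- limit part
    rw [Metric.tendsto_nhdsWithin_nhds]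
    intro ε hε
    set δ : ℝ := min δ₂ (ε / (8 * (M + 1))) with hδdef
    have hδpos : 0 < δ := lt_min hδ₂pos (by positivity)
    have hδδ₂ : δ ≤ δ₂ := min_le_left _ _
    have hδb0 : δ ≤ b0 := le_trans hδδ₂ hδ₂b0
    have hδε : δ ≤ ε / (8 * (M + 1)) := min_le_right _ _
    have hδIoc : δ ∈ Set.Ioc (0:ℝ) b0 := ⟨hδpos, hδb0⟩
    set C : ℝ := ∫ z in δ..b0, f₂ z with hCdef
    obtain ⟨δ₃, hδ₃pos, hδ₃⟩ := (Metric.tendsto_nhdsWithin_nhds.1 hDξ₁lim)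
      (ε * W / (2 * (|C| + 1))) (by positivity)
    refine ⟨min δ δ₃, lt_min hδpos hδ₃pos, ?_⟩
    intro y hy hyd
    have hy0 : 0 < y := hy
    rw [Real.dist_eq, sub_zero, abs_of_pos hy0] at hyd
    have hyδ : y < δ := lt_of_lt_of_le hyd (min_le_left _ _)
    have hyδ₃ : y < δ₃ := lt_of_lt_of_le hyd (min_le_right _ _)
    have hyIoc : y ∈ Set.Ioc (0:ℝ) b0 := ⟨hy0, le_trans hyδ.le hδb0⟩
    -- split the integral
    have hsplit : (∫ z in y..b0, f₂ z) = (∫ z in y..δ, f₂ z) + C := by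
      rw [hCdef]
      exact (intervalIntegral.integral_add_adjacent_intervals
        (hf₂int y hyIoc δ hδIoc hyδ.le) (hf₂int δ hδIoc b0 hb0mem hδb0)).symm
    -- bound term 1a
    have hT1 : |Dξ₁ y * ∫ z in y..δ, f₂ z| ≤ W * (2 * M) * δ := by
      rw [← intervalIntegral.integral_const_mul]
      have hb : ∀ z ∈ Set.uIoc y δ, ‖Dξ₁ y * f₂ z‖ ≤ W * (2 * M) := by
        intro z hz
        rw [Set.uIoc_of_le hyδ.le] at hz
        have hzmem : z ∈ Set.Ioc (0:ℝ) b0 := ⟨lt_trans hy0 hz.1, le_trans hz.2 hδb0⟩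
        have h1 : 0 ≤ Dξ₁ y := hDξ₁nn y hyIoc
        have h2 : 0 ≤ ξ₂ z := hξ₂nn z hzmem
        have h3 : Dξ₁ y * ξ₂ z ≤ W :=
          le_trans (mul_le_mul_of_nonneg_right (hDξ₁mono hyIoc hzmem hz.1.le) h2)
            (key1 z hzmem)
        have h4 : |G z| ≤ M := hM z ⟨hzmem.1.le, hzmem.2⟩
        have h5 : 0 ≤ lamt z := (hlamt_pos z hzmem).le
        have h6 : lamt z ≤ 1 := hlam1 z ⟨hzmem.1, le_trans hz.2 hδδ₂⟩
        have heq : ‖Dξ₁ y * f₂ z‖ = (Dξ₁ y * ξ₂ z) * |G z| * (2 * lamt z) := by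
          rw [hf₂def]
          simp only [Real.norm_eq_abs, abs_mul, abs_of_nonneg h1, abs_of_nonneg h2,
            abs_of_nonneg h5, abs_of_nonneg (by norm_num : (0:ℝ) ≤ 2)]
          ring
        rw [heq]
        calc (Dξ₁ y * ξ₂ z) * |G z| * (2 * lamt z)
            ≤ W * |G z| * (2 * lamt z) := by
              apply mul_le_mul_of_nonneg_right
                (mul_le_mul_of_nonneg_right h3 (abs_nonneg _)) (by linarith)
          _ ≤ W * M * (2 * lamt z) := by
              apply mul_le_mul_of_nonneg_right
                (mul_le_mul_of_nonneg_left h4 hW.le) (by linarith)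
          _ ≤ W * M * 2 := by
              apply mul_le_mul_of_nonneg_left (by linarith)
                (mul_nonneg hW.le hMnn)
          _ = W * (2 * M) := by ring
      calc |∫ z in y..δ, Dξ₁ y * f₂ z| ≤ W * (2 * M) * |δ - y| :=
            intervalIntegral.norm_integral_le_of_norm_le_const hb
        _ ≤ W * (2 * M) * δ := by
            apply mul_le_mul_of_nonneg_left _ (by positivity)
            rw [abs_of_nonneg (by linarith)]
            linarith
    -- bound term 2
    have hT3 : |Dξ₂ y * ∫ z in (0:ℝ)..y, f₁ z| ≤ W * (2 * M) * δ := by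
      rw [← intervalIntegral.integral_const_mul]
      have hb : ∀ z ∈ Set.uIoc (0:ℝ) y, ‖Dξ₂ y * f₁ z‖ ≤ W * (2 * M) := by
        intro z hz
        rw [Set.uIoc_of_le hy0.le] at hz
        have hzmem : z ∈ Set.Ioc (0:ℝ) b0 := ⟨hz.1, le_trans hz.2 hyIoc.2⟩
        have h1 : Dξ₂ y < 0 := hDξ₂neg y hyIoc
        have h2 : 0 ≤ ξ₁ z := hξ₁nn z hzmem
        have h3 : -Dξ₂ y * ξ₁ z ≤ W := by
          refine le_trans ?_ (key2 z hzmem)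
          apply mul_le_mul_of_nonneg_right _ h2
          have := hDξ₂mono hzmem hyIoc hz.2
          linarith
        have h4 : |G z| ≤ M := hM z ⟨hzmem.1.le, hzmem.2⟩
        have h5 : 0 ≤ lamt z := (hlamt_pos z hzmem).le
        have h6 : lamt z ≤ 1 := hlam1 z ⟨hzmem.1, le_trans hz.2 (le_trans hyδ.le hδδ₂)⟩
        have heq : ‖Dξ₂ y * f₁ z‖ = (-Dξ₂ y * ξ₁ z) * |G z| * (2 * lamt z) := by
          rw [hf₁def]
          simp only [Real.norm_eq_abs, abs_mul, abs_of_nonneg h2,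
            abs_of_nonneg h5, abs_of_nonneg (by norm_num : (0:ℝ) ≤ 2),
            abs_of_neg h1]
          ring
        rw [heq]
        calc (-Dξ₂ y * ξ₁ z) * |G z| * (2 * lamt z)
            ≤ W * |G z| * (2 * lamt z) := by
              apply mul_le_mul_of_nonneg_right
                (mul_le_mul_of_nonneg_right h3 (abs_nonneg _)) (by linarith)
          _ ≤ W * M * (2 * lamt z) := by
              apply mul_le_mul_of_nonneg_right
                (mul_le_mul_of_nonneg_left h4 hW.le) (by linarith)
          _ ≤ W * M * 2 := by
              apply mul_le_mul_of_nonneg_left (by linarith)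
                (mul_nonneg hW.le hMnn)
          _ = W * (2 * M) := by ring
      calc |∫ z in (0:ℝ)..y, Dξ₂ y * f₁ z| ≤ W * (2 * M) * |y - 0| :=
            intervalIntegral.norm_integral_le_of_norm_le_const hb
        _ ≤ W * (2 * M) * δ := by
            apply mul_le_mul_of_nonneg_left _ (by positivity)
            rw [sub_zero, abs_of_pos hy0]
            linarith
    -- bound term 1b
    have hT2 : |Dξ₁ y * C| ≤ ε * W / 2 := by
      rw [abs_mul]
      have hDy : |Dξ₁ y| ≤ ε * W / (2 * (|C| + 1)) := by
        have := hδ₃ (Set.mem_Ioi.2 hy0) (by rw [Real.dist_eq, sub_zero, abs_of_pos hy0]; exact hyδ₃)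
        rw [Real.dist_eq, sub_zero] at this
        exact this.le
      calc |Dξ₁ y| * |C| ≤ (ε * W / (2 * (|C| + 1))) * (|C| + 1) :=
            mul_le_mul hDy (by linarith [abs_nonneg C]) (abs_nonneg _) (by positivity)
        _ = ε * W / 2 := by field_simp
    -- combine
    rw [Real.dist_eq, sub_zero, hDgt y, hsplit]
    have habs : |1 / W * (Dξ₁ y * ((∫ z in y..δ, f₂ z) + C) + Dξ₂ y * ∫ z in (0:ℝ)..y, f₁ z)|
        ≤ (1 / W) * (|Dξ₁ y * ∫ z in y..δ, f₂ z| + |Dξ₁ y * C|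
            + |Dξ₂ y * ∫ z in (0:ℝ)..y, f₁ z|) := by
      rw [abs_mul, abs_of_pos (by positivity : (0:ℝ) < 1 / W)]
      apply mul_le_mul_of_nonneg_left _ (by positivity)
      calc |Dξ₁ y * ((∫ z in y..δ, f₂ z) + C) + Dξ₂ y * ∫ z in (0:ℝ)..y, f₁ z|
          ≤ |Dξ₁ y * ((∫ z in y..δ, f₂ z) + C)| + |Dξ₂ y * ∫ z in (0:ℝ)..y, f₁ z| :=
            abs_add_le _ _
        _ ≤ _ := by
            rw [mul_add]
            have := abs_add_le (Dξ₁ y * ∫ z in y..δ, f₂ z) (Dξ₁ y * C)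
            linarith
    refine lt_of_le_of_lt habs ?_
    have hsum : (1 / W) * (|Dξ₁ y * ∫ z in y..δ, f₂ z| + |Dξ₁ y * C|
        + |Dξ₂ y * ∫ z in (0:ℝ)..y, f₁ z|)
        ≤ (1 / W) * (W * (2 * M) * δ + ε * W / 2 + W * (2 * M) * δ) := by
      apply mul_le_mul_of_nonneg_left _ (by positivity)
      linarith
    refine lt_of_le_of_lt hsum ?_
    rw [div_mul_eq_mul_div, one_mul, div_lt_iff₀ hW]
    have hMδ : M * δ ≤ M * (ε / (8 * (M + 1))) :=
      mul_le_mul_of_nonneg_left hδε hMnn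
    have hkey : M * (ε / (8 * (M + 1))) < ε / 8 := by
      rw [mul_div_assoc', div_lt_div_iff₀ (by positivity) (by norm_num : (0:ℝ) < 8)]
      nlinarith
    have hMδ' : M * δ < ε / 8 := lt_of_le_of_lt hMδ hkey
    have h1 : W * (2 * M) * δ + ε * W / 2 + W * (2 * M) * δ = 4 * W * (M * δ) + ε * W / 2 := by
      ring
    have h2 : 4 * W * (ε / 8) = ε * W / 2 := by ring
    have h3 := mul_lt_mul_of_pos_left hMδ' (by positivity : (0:ℝ) < 4 * W)
    linarith
end

section
/- Let a < 0 < b₀, let ũ : [a, b₀] → ℝ be continuous and strictly increasing with ũ(0) = 0, and let f : ℝ × [a, b₀] → ℝ be continuous, 2π-periodic in its first variable, with f(θ, 0) = f(0, 0) for all θ, and attaining its maximum over ℝ × [a, b₀] at the points (θ, 0). Suppose that for each θ the one-sided limits D⁺(θ) = lim_{y→0⁺} (f(θ, y) − f(θ, 0))/ũ(y) and D⁻(θ) = lim_{y→0⁻} (f(θ, y) − f(θ, 0))/ũ(y) exist, are finite, depend continuously on θ, and satisfy the gluing condition ∫₀^{2π} D⁻(θ) dθ = ∫₀^{2π} D⁺(θ)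 dθ. Then D⁺(θ) = D⁻(θ) = 0 for all θ. -/
open Filter Topology intervalIntegral Real

/-- maximum principle at the glued point of the cylinder. If f (2π-periodic
in θ, constant on the glued circle y = 0) attains its maximum at the points (θ, 0), the
one-sided generalized derivatives D±(θ) with respect to ũ exist, are finite, depend
continuously on θ, and satisfy the gluing condition ∫₀^{2π} D⁻ = ∫₀^{2π} D⁺, then
D⁺ ≡ D⁻ ≡ 0. -/
theorem cylinder_glued_point_max_principle
    (a b0 : ℝ) (ha : a < 0) (hb : 0 < b0)
    (util : ℝ → ℝ)
    (hcont : ContinuousOn util (Set.Icc a b0))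
    (hmono : StrictMonoOn util (Set.Icc a b0))
    (hutil0 : util 0 = 0)
    (f : ℝ → ℝ → ℝ)
    (hfc : ContinuousOn (fun p : ℝ × ℝ => f p.1 p.2) (Set.univ ×ˢ Set.Icc a b0))
    (hper : ∀ θ y : ℝ, f (θ + 2 * π) y = f θ y)
    (hglue : ∀ θ : ℝ, f θ 0 = f 0 0)
    (hmax : ∀ θ : ℝ, ∀ y ∈ Set.Icc a b0, f θ y ≤ f 0 0)
    (Dp Dm : ℝ → ℝ)
    (hDp : ∀ θ : ℝ, Tendsto (fun y => (f θ y - f θ 0) / util y)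
      (𝓝[>] (0:ℝ)) (𝓝 (Dp θ)))
    (hDm : ∀ θ : ℝ, Tendsto (fun y => (f θ y - f θ 0) / util y)
      (𝓝[<] (0:ℝ)) (𝓝 (Dm θ)))
    (hDpc : Continuous Dp) (hDmc : Continuous Dm)
    (hgluing : (∫ θ in (0:ℝ)..(2 * π), Dm θ) = ∫ θ in (0:ℝ)..(2 * π), Dp θ) :
    ∀ θ : ℝ, Dp θ = 0 ∧ Dm θ = 0 := by
  -- Signs of ratios near 0
  have hmem0 : (0:ℝ) ∈ Set.Icc a b0 := ⟨ha.le, hb.le⟩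
  have hDp_nonpos : ∀ θ, Dp θ ≤ 0 := by
    intro θ
    refine le_of_tendsto (hDp θ) ?_
    filter_upwards [Ioo_mem_nhdsGT_of_mem (Set.left_mem_Ico.2 hb)] with y hy
    have hymem : y ∈ Set.Icc a b0 := ⟨le_of_lt (ha.trans hy.1), hy.2.le⟩
    have hupos : 0 < util y := by
      have := hmono hmem0 hymem hy.1
      rwa [hutil0] at this
    have hnum : f θ y - f θ 0 ≤ 0 := by
      rw [hglue θ]; exact sub_nonpos.2 (hmax θ y hymem)
    exact div_nonpos_of_nonpos_of_nonneg hnum hupos.le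
  have hDm_nonneg : ∀ θ, 0 ≤ Dm θ := by
    intro θ
    refine ge_of_tendsto (hDm θ) ?_
    filter_upwards [Ioo_mem_nhdsLT_of_mem (Set.right_mem_Ioc.2 ha)] with y hy
    have hymem : y ∈ Set.Icc a b0 := ⟨hy.1.le, le_of_lt (hy.2.trans hb)⟩
    have huneg : util y < 0 := by
      have := hmono hymem hmem0 hy.2
      rwa [hutil0] at this
    have hnum : f θ y - f θ 0 ≤ 0 := by
      rw [hglue θ]; exact sub_nonpos.2 (hmax θ y hymem)
    exact div_nonneg_iff.2 (Or.inr ⟨hnum, huneg.le⟩)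
  -- Periodicity of Dp, Dm
  have hDp_per : Function.Periodic Dp (2 * π) := by
    intro θ
    refine tendsto_nhds_unique ?_ (hDp θ)
    have := hDp (θ + 2 * π)
    simpa only [hper θ] using this
  have hDm_per : Function.Periodic Dm (2 * π) := by
    intro θ
    refine tendsto_nhds_unique ?_ (hDm θ)
    have := hDm (θ + 2 * π)
    simpa only [hper θ] using this
  -- The common integral is zero
  have hpi : (0:ℝ) < 2 * π := by positivity
  have hInonneg : 0 ≤ ∫ θ in (0:ℝ)..(2 * π), Dm θ :=
    intervalIntegral.integral_nonneg hpi.le (fun u _ => hDm_nonneg u)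
  have hInonpos : (∫ θ in (0:ℝ)..(2 * π), Dp θ) ≤ 0 := by
    rw [← neg_nonneg, ← intervalIntegral.integral_neg]
    exact intervalIntegral.integral_nonneg hpi.le
      (fun u _ => neg_nonneg.2 (hDp_nonpos u))
  have hIp0 : (∫ θ in (0:ℝ)..(2 * π), Dp θ) = 0 :=
    le_antisymm hInonpos (hgluing ▸ hInonneg)
  have hIm0 : (∫ θ in (0:ℝ)..(2 * π), Dm θ) = 0 := hgluing.trans hIp0
  intro θ
  constructor
  · by_contra h
    have hnegper : Function.Periodic (fun t => -Dp t) (2 * π) := fun t => by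
      simp [hDp_per t]
    have hlt : 0 < -Dp θ := by
      have := lt_of_le_of_ne (hDp_nonpos θ) h
      linarith
    have hshift : (∫ t in (θ - π)..((θ - π) + 2 * π), -Dp t)
        = ∫ t in (0:ℝ)..(0 + 2 * π), -Dp t :=
      hnegper.intervalIntegral_add_eq (θ - π) 0
    have hpos : 0 < ∫ t in (θ - π)..((θ - π) + 2 * π), -Dp t := by
      apply intervalIntegral.integral_pos (by linarith)
        ((hDpc.neg).continuousOn)
        (fun x _ => neg_nonneg.2 (hDp_nonpos x))
      exact ⟨θ, ⟨by linarith, by linarith⟩, hlt⟩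
    rw [hshift] at hpos
    simp only [zero_add] at hpos
    rw [intervalIntegral.integral_neg, hIp0, neg_zero] at hpos
    exact lt_irrefl _ hpos
  · by_contra h
    have hlt : 0 < Dm θ := lt_of_le_of_ne (hDm_nonneg θ) (Ne.symm h)
    have hshift : (∫ t in (θ - π)..((θ - π) + 2 * π), Dm t)
        = ∫ t in (0:ℝ)..(0 + 2 * π), Dm t :=
      hDm_per.intervalIntegral_add_eq (θ - π) 0
    have hpos : 0 < ∫ t in (θ - π)..((θ - π) + 2 * π), Dm t := by
      apply intervalIntegral.integral_pos (by linarith)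
        (hDmc.continuousOn) (fun x _ => hDm_nonneg x)
      exact ⟨θ, ⟨by linarith, by linarith⟩, hlt⟩
    rw [hshift] at hpos
    simp only [zero_add] at hpos
    rw [hIm0] at hpos
    exact lt_irrefl _ hpos
end

section
/- For every μ > 0 and every continuous F : [a, b₀] → ℝ there exists a continuous function f : [a, b₀] → ℝ, twice continuously differentiable on [a, 0) ∪ (0, b₀], such that: (i) μ·f(q) − (1/ṽ′(q))·(d/dq)(f′(q)/ũ′(q)) = F(q) for all q ∈ [a, b₀] with q ≠ 0; (ii) the one-sided limits lim_{δ→0⁺} (f(δ) − f(0))/ũ(δ) and lim_{δ→0⁺} (f(0) − f(−δ))/(−ũ(−δ)) exist, are finite and equal; and (iii) μ·f(a) = F(a) and μ·f(b₀) = F(b₀). -/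
open Filter Topology intervalIntegral MeasureTheory


lemma abs_pow_integral_nonneg (n : ℕ) (b : ℝ) (hb : 0 ≤ b) :
    (∫ s in (0:ℝ)..b, |s| ^ n) = b ^ (n + 1) / (n + 1) := by
  rw [show (∫ s in (0:ℝ)..b, |s| ^ n) = ∫ s in (0:ℝ)..b, s ^ n from
    intervalIntegral.integral_congr (fun s hs => by
      rw [Set.uIcc_of_le hb] at hs
      rw [abs_of_nonneg hs.1]), integral_pow]
  simp

lemma abs_integral_abs_pow (n : ℕ) (c τ : ℝ) :
    |∫ s in c..τ, |s - c| ^ n| = |τ - c| ^ (n + 1) / (n + 1) := by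
  rw [intervalIntegral.integral_comp_sub_right (fun u => |u| ^ n) c, sub_self]
  rcases le_total 0 (τ - c) with h | h
  · rw [abs_pow_integral_nonneg n _ h, abs_of_nonneg h,
      abs_of_nonneg (by positivity)]
  · have h1 : (∫ s in (0:ℝ)..(τ - c), |s| ^ n) = ∫ s in (0:ℝ)..(τ - c), |(-s)| ^ n := by
      apply intervalIntegral.integral_congr; intro s _; simp [abs_neg]
    rw [h1, intervalIntegral.integral_comp_neg (fun u => |u| ^ n), neg_zero,
      intervalIntegral.integral_symm, abs_neg,
      abs_pow_integral_nonneg n _ (by linarith), abs_of_nonpos h, abs_of_nonneg (div_nonneg (pow_nonneg (by linarith) _) (by positivity))]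

lemma exists_system_solution
    (p r G : ℝ → ℝ) (hp : Continuous p) (hr : Continuous r) (hG : Continuous G)
    (μ : ℝ) (A B : ℝ) (hAB : A ≤ B) (t₀ : ℝ) (ht₀ : t₀ ∈ Set.Icc A B) (α β : ℝ) :
    ∃ f g : ℝ → ℝ, f t₀ = α ∧ g t₀ = β ∧ Continuous f ∧ Continuous g ∧
      (∀ t ∈ Set.Ioo A B, HasDerivAt f (p t * g t) t) ∧
      (∀ t ∈ Set.Ioo A B, HasDerivAt g (r t * (μ * f t - G t)) t) := by
  classical
  set π : ℝ → ℝ := fun t => max A (min t B) with hπdef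
  have hπmem : ∀ t, π t ∈ Set.Icc A B := fun t =>
    ⟨le_max_left _ _, max_le hAB (min_le_right _ _)⟩
  have hπid : ∀ t ∈ Set.Icc A B, π t = t := fun t ht => by
    simp only [hπdef]; rw [min_eq_left ht.2, max_eq_right ht.1]
  have hπcont : Continuous π := continuous_const.max (continuous_id.min continuous_const)
  set V : ℝ → ℝ × ℝ → ℝ × ℝ :=
    fun t z => (p (π t) * z.2, r (π t) * (μ * z.1 - G (π t))) with hVdef
  -- bounds on the coefficients
  obtain ⟨Cp, hCp⟩ := isCompact_Icc.exists_bound_of_continuousOn (hp.continuousOn (s := Set.Icc A B))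
  obtain ⟨Cr, hCr⟩ := isCompact_Icc.exists_bound_of_continuousOn (hr.continuousOn (s := Set.Icc A B))
  set K : ℝ := max Cp (|μ| * Cr) with hKdef
  have hCp0 : 0 ≤ Cp := le_trans (norm_nonneg _) (hCp _ (hπmem t₀))
  have hCr0 : 0 ≤ Cr := le_trans (norm_nonneg _) (hCr _ (hπmem t₀))
  have hK0 : 0 ≤ K := le_trans hCp0 (le_max_left _ _)
  have hVlip : ∀ t z w, ‖V t z - V t w‖ ≤ K * ‖z - w‖ := by
    intro t z w
    have h1 : V t z - V t w = (p (π t) * (z.2 - w.2), r (π t) * μ * (z.1 - w.1)) := by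
      simp only [hVdef, Prod.mk_sub_mk]; exact Prod.ext (by ring) (by ring)
    rw [h1, Prod.norm_def]
    have e1 : ‖p (π t) * (z.2 - w.2)‖ ≤ K * ‖z - w‖ := by
      rw [norm_mul]
      calc ‖p (π t)‖ * ‖z.2 - w.2‖ ≤ Cp * ‖z - w‖ := by
            apply mul_le_mul (hCp _ (hπmem t)) _ (norm_nonneg _) hCp0
            exact (norm_snd_le (z - w))
        _ ≤ K * ‖z - w‖ := by
            apply mul_le_mul_of_nonneg_right (le_max_left _ _) (norm_nonneg _)
    have e2 : ‖r (π t) * μ * (z.1 - w.1)‖ ≤ K * ‖z - w‖ := by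
      rw [norm_mul, norm_mul]
      calc ‖r (π t)‖ * ‖μ‖ * ‖z.1 - w.1‖ ≤ (Cr * |μ|) * ‖z - w‖ := by
            apply mul_le_mul _ (norm_fst_le (z - w)) (norm_nonneg _) (by positivity)
            exact mul_le_mul (hCr _ (hπmem t)) le_rfl (norm_nonneg _) hCr0
        _ ≤ K * ‖z - w‖ := by
            apply mul_le_mul_of_nonneg_right _ (norm_nonneg _)
            rw [mul_comm]; exact le_max_right _ _
    exact max_le e1 e2
  set X := BoundedContinuousFunction ℝ (ℝ × ℝ) with hXdef
  set x₀ : ℝ × ℝ := (α, β) with hx₀def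
  have hVcont : ∀ x : X, Continuous fun s => V s (x s) := by
    intro x
    apply Continuous.prodMk
    · exact (hp.comp hπcont).mul ((continuous_snd.comp x.continuous))
    · exact (hr.comp hπcont).mul
        ((continuous_const.mul (continuous_fst.comp x.continuous)).sub (hG.comp hπcont))
  have hΦcont : ∀ x : X, Continuous fun t => x₀ + ∫ s in t₀..π t, V s (x s) := by
    intro x
    exact continuous_const.add
      ((intervalIntegral.continuous_primitive (μ := volume) (fun a b => (hVcont x).intervalIntegrable a b)
        t₀).comp hπcont)
  have hΦbdd : ∀ x : X, ∃ C, ∀ t, ‖x₀ + ∫ s in t₀..π t, V s (x s)‖ ≤ C := by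
    intro x
    obtain ⟨C, hC⟩ := isCompact_Icc.exists_bound_of_continuousOn
      ((intervalIntegral.continuous_primitive (μ := volume) (fun a b => (hVcont x).intervalIntegrable a b)
        t₀).continuousOn (s := Set.Icc A B))
    exact ⟨‖x₀‖ + C, fun t => (norm_add_le _ _).trans
      (add_le_add le_rfl (hC _ (hπmem t)))⟩
  set Φ : X → X := fun x => BoundedContinuousFunction.ofNormedAddCommGroup
    _ (hΦcont x) _ (Classical.choose_spec (hΦbdd x)) with hΦdef
  have hΦapp : ∀ (x : X) (t : ℝ), Φ x t = x₀ + ∫ s in t₀..π t, V s (x s) := fun x t => rfl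
  -- key iterate estimate
  have key : ∀ (n : ℕ) (x y : X) (t : ℝ),
      ‖(Φ^[n] x) t - (Φ^[n] y) t‖ ≤ K ^ n * |π t - t₀| ^ n / n.factorial * dist x y := by
    intro n
    induction n with
    | zero =>
      intro x y t
      simpa [← dist_eq_norm] using BoundedContinuousFunction.dist_coe_le_dist (f := x) (g := y) t
    | succ n ih =>
      intro x y t
      rw [Function.iterate_succ_apply', Function.iterate_succ_apply']
      set z := Φ^[n] x with hz
      set w := Φ^[n] y with hw
      have hsub : (Φ z) t - (Φ w) t = ∫ s in t₀..π t, (V s (z s) - V s (w s)) := by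
        rw [hΦapp, hΦapp, intervalIntegral.integral_sub
          ((hVcont z).intervalIntegrable _ _) ((hVcont w).intervalIntegrable _ _)]
        abel
      rw [hsub]
      have hbound : ∀ s ∈ Set.uIoc t₀ (π t), ‖V s (z s) - V s (w s)‖ ≤
          K ^ (n+1) / n.factorial * dist x y * |s - t₀| ^ n := by
        intro s hs
        have hs' : s ∈ Set.Icc A B :=
          (Set.uIcc_subset_Icc ht₀ (hπmem t)) (Set.uIoc_subset_uIcc hs)
        have h1 : ‖V s (z s) - V s (w s)‖ ≤ K * ‖z s - w s‖ := hVlip s _ _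
        have h2 : ‖z s - w s‖ ≤ K ^ n * |π s - t₀| ^ n / n.factorial * dist x y := ih x y s
        rw [hπid s hs'] at h2
        calc ‖V s (z s) - V s (w s)‖ ≤ K * (K ^ n * |s - t₀| ^ n / n.factorial * dist x y) :=
              le_trans h1 (mul_le_mul_of_nonneg_left h2 hK0)
          _ = K ^ (n+1) / n.factorial * dist x y * |s - t₀| ^ n := by ring
      have hgint : IntervalIntegrable
          (fun s => K ^ (n+1) / n.factorial * dist x y * |s - t₀| ^ n) volume t₀ (π t) :=
        (Continuous.intervalIntegrable (continuous_const.mul (((continuous_id.sub continuous_const).abs).pow n))) _ _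
      have h3 := intervalIntegral.norm_integral_le_abs_of_norm_le
        (f := fun s => V s (z s) - V s (w s))
        (μ := volume) (a := t₀) (b := π t)
        (MeasureTheory.ae_restrict_of_forall_mem measurableSet_uIoc hbound) hgint
      have h4 : |∫ s in t₀..π t, K ^ (n+1) / n.factorial * dist x y * |s - t₀| ^ n|
          = K ^ (n+1) / n.factorial * dist x y * (|π t - t₀| ^ (n+1) / (n+1)) := by
        rw [intervalIntegral.integral_const_mul, abs_mul,
          abs_of_nonneg (by positivity : (0:ℝ) ≤ K ^ (n+1) / n.factorial * dist x y),
          abs_integral_abs_pow]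
      rw [h4] at h3
      refine h3.trans (le_of_eq ?_)
      rw [Nat.factorial_succ]
      push_cast
      field_simp
  -- dist estimate on iterates
  set T : ℝ := B - A with hTdef
  have hT0 : 0 ≤ T := by simp [hTdef]; linarith [hAB]
  have hπT : ∀ t, |π t - t₀| ≤ T := by
    intro t
    have h1 := hπmem t
    rw [abs_le]
    constructor <;> [linarith [h1.1, ht₀.2]; linarith [h1.2, ht₀.1]]
  have hDn : ∀ (n : ℕ) (x y : X), dist (Φ^[n] x) (Φ^[n] y) ≤ (K * T) ^ n / n.factorial * dist x y := by
    intro n x y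
    rw [BoundedContinuousFunction.dist_le (by positivity)]
    intro t
    rw [dist_eq_norm]
    refine (key n x y t).trans ?_
    rw [mul_pow]
    apply mul_le_mul_of_nonneg_right _ dist_nonneg
    apply div_le_div_of_nonneg_right _ _ |>.trans le_rfl
    · exact mul_le_mul_of_nonneg_left
        (pow_le_pow_left₀ (abs_nonneg _) (hπT t) n) (pow_nonneg hK0 n)
    · positivity
  obtain ⟨n, hn⟩ : ∃ n : ℕ, (K * T) ^ n / n.factorial < 1 := by
    have := FloorSemiring.tendsto_pow_div_factorial_atTop (K * T)
    obtain ⟨n, hn⟩ := (this.eventually (eventually_lt_nhds zero_lt_one)).exists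
    exact ⟨n, by simpa using hn⟩
  set c : NNReal := Real.toNNReal ((K * T) ^ n / n.factorial) with hcdef
  have hc_coe : (c : ℝ) = (K * T) ^ n / n.factorial := Real.coe_toNNReal _ (by positivity)
  have hcontr : ContractingWith c (Φ^[n]) := by
    constructor
    · rw [← NNReal.coe_lt_coe, hc_coe]; exact_mod_cast hn
    · apply LipschitzWith.of_dist_le_mul
      intro x y
      rw [hc_coe]
      exact hDn n x y
  haveI : Nonempty X := ⟨0⟩
  set z : X := hcontr.fixedPoint (Φ^[n]) with hzdef
  have hzfix : Φ^[n] z = z := hcontr.fixedPoint_isFixedPt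
  have hfix : Φ z = z := by
    have h1 : Φ^[n] (Φ z) = Φ z := by
      rw [← Function.iterate_succ_apply, Function.iterate_succ_apply', hzfix]
    exact (hcontr.fixedPoint_unique h1).trans hzdef.symm
  have heq : ∀ t, (z : ℝ → ℝ × ℝ) t = x₀ + ∫ s in t₀..π t, V s (z s) := by
    intro t
    conv_lhs => rw [← hfix]
    exact hΦapp z t
  have hzc : Continuous (z : ℝ → ℝ × ℝ) := z.continuous
  have hzderiv : ∀ t ∈ Set.Ioo A B, HasDerivAt (fun τ => (z : ℝ → ℝ × ℝ) τ) (V t (z t)) t := by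
    intro t ht
    have hVc : Continuous fun s => V s (z s) := hVcont z
    have hprim : HasDerivAt (fun τ => x₀ + ∫ s in t₀..τ, V s (z s)) (V t (z t)) t := by
      apply HasDerivAt.const_add
      exact intervalIntegral.integral_hasDerivAt_right (hVc.intervalIntegrable _ _)
        (hVc.stronglyMeasurable.stronglyMeasurableAtFilter) hVc.continuousAt
    apply hprim.congr_of_eventuallyEq
    filter_upwards [isOpen_Ioo.mem_nhds ht] with τ hτ
    rw [heq τ, hπid τ (Set.Ioo_subset_Icc_self hτ)]
  refine ⟨fun t => ((z : ℝ → ℝ × ℝ) t).1, fun t => ((z : ℝ → ℝ × ℝ) t).2, ?_, ?_, ?_, ?_, ?_, ?_⟩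
  · show ((z : ℝ → ℝ × ℝ) t₀).1 = α
    rw [heq t₀, hπid t₀ ht₀, intervalIntegral.integral_same, add_zero]
  · show ((z : ℝ → ℝ × ℝ) t₀).2 = β
    rw [heq t₀, hπid t₀ ht₀, intervalIntegral.integral_same, add_zero]
  · exact continuous_fst.comp hzc
  · exact continuous_snd.comp hzc
  · intro t ht
    have h := (ContinuousLinearMap.fst ℝ ℝ ℝ).hasFDerivAt.comp_hasDerivAt t (hzderiv t ht)
    have he : (V t (z t)).1 = p t * ((z : ℝ → ℝ × ℝ) t).2 := by
      simp only [hVdef]; rw [hπid t (Set.Ioo_subset_Icc_self ht)]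
    rw [← he]; exact h
  · intro t ht
    have h := (ContinuousLinearMap.snd ℝ ℝ ℝ).hasFDerivAt.comp_hasDerivAt t (hzderiv t ht)
    have he : (V t (z t)).2 = r t * (μ * ((z : ℝ → ℝ × ℝ) t).1 - G t) := by
      simp only [hVdef]; rw [hπid t (Set.Ioo_subset_Icc_self ht)]
    rw [← he]; exact h

lemma resolvent_aux_limits
    (u util : ℝ → ℝ)
    (P p : ℝ → ℝ)
    (hPcont : Continuous P) (hpcont : Continuous p)
    (hpdef : p = fun y => if y ≤ 0 then P (y - 1) else P (y + 1))
    (hPzero : ∀ x ∈ Set.Icc (-1:ℝ) 1, P x = 0)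
    (hP1' : P (-1:ℝ) = 0) (hP1'' : P (1:ℝ) = 0)
    (hp_nonneg : ∀ y, 0 ≤ p y)
    (hp_pos : ∀ y : ℝ, y ≠ 0 → 0 < p y)
    (hpint : ∀ c d : ℝ, IntervalIntegrable p volume c d)
    (huP : ∀ q, u q = ∫ x in (0:ℝ)..q, P x)
    (a b0 : ℝ) (ha : a < 0) (hb : 0 < b0)
    (hutil_neg : ∀ y : ℝ, y < 0 → util y = u (y - 1))
    (hutil_pos : ∀ y : ℝ, 0 < y → util y = u (y + 1))
    (A B : ℝ) (hAdef : A = a - 1) (hBdef : B = b0 + 1)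
    (f g : ℝ → ℝ) (hfcont : Continuous f) (hgcont : Continuous g)
    (hfd : ∀ t ∈ Set.Ioo A B, HasDerivAt f (p t * g t) t) :
    ∃ L : ℝ,
      Tendsto (fun δ : ℝ => (f δ - f 0) / util δ) (𝓝[>] (0:ℝ)) (𝓝 L) ∧
      Tendsto (fun δ : ℝ => (f 0 - f (-δ)) / (-util (-δ))) (𝓝[>] (0:ℝ)) (𝓝 L) := by
  -- integral identities for util near 0
  have hputilint : ∀ δ : ℝ, 0 < δ → util δ = ∫ s in (0:ℝ)..δ, p s := by
    intro δ hδ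
    rw [hutil_pos δ hδ, huP (δ+1)]
    have e1 : (∫ x in (0:ℝ)..(1:ℝ), P x) = 0 := by
      rw [intervalIntegral.integral_congr (g := fun _ => (0:ℝ)) (fun x hx => by
        rw [Set.uIcc_of_le (by norm_num : (0:ℝ) ≤ 1)] at hx
        exact hPzero x ⟨by linarith [hx.1], hx.2⟩)]
      simp
    have e2 : (∫ x in (0:ℝ)..(δ+1), P x)
        = (∫ x in (0:ℝ)..(1:ℝ), P x) + ∫ x in (1:ℝ)..(δ+1), P x :=
      (intervalIntegral.integral_add_adjacent_intervals (hPcont.intervalIntegrable _ _)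
        (hPcont.intervalIntegrable _ _)).symm
    have e3 : (∫ s in (0:ℝ)..δ, P (s+1)) = ∫ x in (1:ℝ)..(δ+1), P x := by
      simpa using intervalIntegral.integral_comp_add_right (a := 0) (b := δ) P 1
    have e4 : (∫ s in (0:ℝ)..δ, p s) = ∫ s in (0:ℝ)..δ, P (s+1) := by
      apply intervalIntegral.integral_congr
      intro s hs
      rw [Set.uIcc_of_le hδ.le] at hs
      rcases eq_or_lt_of_le hs.1 with h | h
      · simp only [hpdef, ← h]
        norm_num [hP1', hP1'']
      · simp only [hpdef]
        rw [if_neg (not_le.mpr h)]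
    rw [e2, e1, zero_add, ← e3, e4]
  have hnutilint : ∀ δ : ℝ, 0 < δ → -util (-δ) = ∫ s in (-δ)..(0:ℝ), p s := by
    intro δ hδ
    rw [hutil_neg (-δ) (by linarith), huP (-δ-1)]
    have e0 : (∫ x in (0:ℝ)..(-δ-1), P x) = -∫ x in (-δ-1)..(0:ℝ), P x :=
      intervalIntegral.integral_symm _ _
    have e1 : (∫ x in (-1:ℝ)..(0:ℝ), P x) = 0 := by
      rw [intervalIntegral.integral_congr (g := fun _ => (0:ℝ)) (fun x hx => by
        rw [Set.uIcc_of_le (by norm_num : (-1:ℝ) ≤ 0)] at hx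
        exact hPzero x ⟨hx.1, by linarith [hx.2]⟩)]
      simp
    have e2 : (∫ x in (-δ-1)..(0:ℝ), P x)
        = (∫ x in (-δ-1)..(-1:ℝ), P x) + ∫ x in (-1:ℝ)..(0:ℝ), P x :=
      (intervalIntegral.integral_add_adjacent_intervals (hPcont.intervalIntegrable _ _)
        (hPcont.intervalIntegrable _ _)).symm
    have e3 : (∫ s in (-δ)..(0:ℝ), P (s-1)) = ∫ x in (-δ-1)..(-1:ℝ), P x := by
      simpa using intervalIntegral.integral_comp_sub_right (a := -δ) (b := 0) P 1
    have e4 : (∫ s in (-δ)..(0:ℝ), p s) = ∫ s in (-δ)..(0:ℝ), P (s-1) := by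
      apply intervalIntegral.integral_congr
      intro s hs
      rw [Set.uIcc_of_le (by linarith : -δ ≤ (0:ℝ))] at hs
      simp only [hpdef]
      rw [if_pos hs.2]
    rw [e0, e2, e1, add_zero, ← e3, e4, neg_neg]
  have hUposR : ∀ δ : ℝ, 0 < δ → 0 < ∫ s in (0:ℝ)..δ, p s := by
    intro δ hδ
    exact intervalIntegral.intervalIntegral_pos_of_pos_on (hpint _ _)
      (fun x hx => hp_pos x (ne_of_gt hx.1)) hδ
  have hUposL : ∀ δ : ℝ, 0 < δ → 0 < ∫ s in (-δ)..(0:ℝ), p s := by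
    intro δ hδ
    exact intervalIntegral.intervalIntegral_pos_of_pos_on (hpint _ _)
      (fun x hx => hp_pos x (ne_of_lt hx.2)) (by linarith)
  have hFTC : ∀ c d : ℝ, Set.uIcc c d ⊆ Set.Ioo A B →
      f d - f c = ∫ s in c..d, p s * g s := by
    intro c d hcd
    exact (intervalIntegral.integral_eq_sub_of_hasDerivAt
      (fun x hx => hfd x (hcd hx))
      ((hpcont.mul hgcont).intervalIntegrable _ _)).symm
  -- the two one-sided limits
  have hlimR : Tendsto (fun δ : ℝ => (f δ - f 0) / util δ) (𝓝[>] (0:ℝ)) (𝓝 (g 0)) := by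
    rw [Metric.tendsto_nhdsWithin_nhds]
    intro ε hε
    obtain ⟨δ₁, hδ₁, hδ₁prop⟩ := Metric.continuousAt_iff.mp hgcont.continuousAt (ε/2) (by linarith)
    refine ⟨min δ₁ 1, lt_min hδ₁ one_pos, ?_⟩
    intro δ hδmem hδdist
    have hδpos : 0 < δ := hδmem
    have hδlt : δ < min δ₁ 1 := by
      rwa [Real.dist_eq, sub_zero, abs_of_pos hδpos] at hδdist
    have hδ1 : δ < δ₁ := lt_of_lt_of_le hδlt (min_le_left _ _)
    have hδ2 : δ < 1 := lt_of_lt_of_le hδlt (min_le_right _ _)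
    have huIcc : Set.uIcc 0 δ ⊆ Set.Ioo A B := by
      rw [Set.uIcc_of_le hδpos.le]
      intro x hx
      exact ⟨by rw [hAdef]; linarith [hx.1], by rw [hBdef]; linarith [hx.2]⟩
    have hfd0 : f δ - f 0 = ∫ s in (0:ℝ)..δ, p s * g s := hFTC 0 δ huIcc
    have hU := hputilint δ hδpos
    have hUpos := hUposR δ hδpos
    have hutilpos : 0 < util δ := by rw [hU]; exact hUpos
    have hnum : f δ - f 0 - g 0 * util δ = ∫ s in (0:ℝ)..δ, p s * (g s - g 0) := by
      rw [hfd0, hU, ← intervalIntegral.integral_const_mul,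
        ← intervalIntegral.integral_sub (f := fun s => p s * g s) (g := fun x => g 0 * p x) ((hpcont.mul hgcont).intervalIntegrable _ _)
          ((continuous_const.mul hpcont).intervalIntegrable _ _)]
      apply intervalIntegral.integral_congr
      intro s _
      ring
    have hbound : ‖∫ s in (0:ℝ)..δ, p s * (g s - g 0)‖ ≤ |∫ s in (0:ℝ)..δ, ε/2 * p s| := by
      apply intervalIntegral.norm_integral_le_abs_of_norm_le _
        ((continuous_const.mul hpcont).intervalIntegrable _ _)
      apply MeasureTheory.ae_restrict_of_forall_mem measurableSet_uIoc
      intro s hs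
      have hs' : s ∈ Set.Ioc 0 δ := by rwa [Set.uIoc_of_le hδpos.le] at hs
      have h1 : |g s - g 0| ≤ ε/2 := by
        have h2 := hδ₁prop (x := s) (by
          rw [Real.dist_eq, sub_zero, abs_of_pos hs'.1]; linarith [hs'.2])
        rw [Real.dist_eq] at h2
        linarith
      calc ‖p s * (g s - g 0)‖ = p s * |g s - g 0| := by
            rw [norm_mul, Real.norm_eq_abs, Real.norm_eq_abs, abs_of_nonneg (hp_nonneg s)]
        _ ≤ ε/2 * p s := by
            rw [mul_comm]
            exact mul_le_mul_of_nonneg_right h1 (hp_nonneg s)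
    have habs : |∫ s in (0:ℝ)..δ, ε/2 * p s| = ε/2 * ∫ s in (0:ℝ)..δ, p s := by
      rw [intervalIntegral.integral_const_mul, abs_mul,
        abs_of_nonneg (by linarith : (0:ℝ) ≤ ε/2), abs_of_pos hUpos]
    rw [Real.dist_eq]
    have hre : (f δ - f 0)/util δ - g 0 = (f δ - f 0 - g 0 * util δ)/util δ := by
      field_simp
    rw [hre, abs_div, abs_of_pos hutilpos, hnum]
    have hle : |∫ s in (0:ℝ)..δ, p s * (g s - g 0)| ≤ ε/2 * util δ := by
      rw [hU]
      calc |∫ s in (0:ℝ)..δ, p s * (g s - g 0)| ≤ |∫ s in (0:ℝ)..δ, ε/2 * p s| := hbound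
        _ = ε/2 * ∫ s in (0:ℝ)..δ, p s := habs
    calc |∫ s in (0:ℝ)..δ, p s * (g s - g 0)| / util δ ≤ (ε/2 * util δ) / util δ := by
          exact div_le_div_of_nonneg_right hle hutilpos.le
      _ = ε/2 := by rw [mul_div_assoc, div_self (ne_of_gt hutilpos), mul_one]
      _ < ε := by linarith
  have hlimL : Tendsto (fun δ : ℝ => (f 0 - f (-δ)) / (-util (-δ))) (𝓝[>] (0:ℝ)) (𝓝 (g 0)) := by
    rw [Metric.tendsto_nhdsWithin_nhds]
    intro ε hε
    obtain ⟨δ₁, hδ₁, hδ₁prop⟩ := Metric.continuousAt_iff.mp hgcont.continuousAt (ε/2) (by linarith)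
    refine ⟨min δ₁ 1, lt_min hδ₁ one_pos, ?_⟩
    intro δ hδmem hδdist
    have hδpos : 0 < δ := hδmem
    have hδlt : δ < min δ₁ 1 := by
      rwa [Real.dist_eq, sub_zero, abs_of_pos hδpos] at hδdist
    have hδ1 : δ < δ₁ := lt_of_lt_of_le hδlt (min_le_left _ _)
    have hδ2 : δ < 1 := lt_of_lt_of_le hδlt (min_le_right _ _)
    have huIcc : Set.uIcc (-δ) 0 ⊆ Set.Ioo A B := by
      rw [Set.uIcc_of_le (by linarith : -δ ≤ (0:ℝ))]
      intro x hx
      exact ⟨by rw [hAdef]; linarith [hx.1], by rw [hBdef]; linarith [hx.2]⟩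
    have hfd0 : f 0 - f (-δ) = ∫ s in (-δ)..(0:ℝ), p s * g s := hFTC (-δ) 0 huIcc
    have hU := hnutilint δ hδpos
    have hUpos := hUposL δ hδpos
    have hutilpos : 0 < -util (-δ) := by rw [hU]; exact hUpos
    have hnum : f 0 - f (-δ) - g 0 * (-util (-δ)) = ∫ s in (-δ)..(0:ℝ), p s * (g s - g 0) := by
      rw [hfd0, hU, ← intervalIntegral.integral_const_mul,
        ← intervalIntegral.integral_sub (f := fun s => p s * g s) (g := fun x => g 0 * p x) ((hpcont.mul hgcont).intervalIntegrable _ _)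
          ((continuous_const.mul hpcont).intervalIntegrable _ _)]
      apply intervalIntegral.integral_congr
      intro s _
      ring
    have hbound : ‖∫ s in (-δ)..(0:ℝ), p s * (g s - g 0)‖
        ≤ |∫ s in (-δ)..(0:ℝ), ε/2 * p s| := by
      apply intervalIntegral.norm_integral_le_abs_of_norm_le _
        ((continuous_const.mul hpcont).intervalIntegrable _ _)
      apply MeasureTheory.ae_restrict_of_forall_mem measurableSet_uIoc
      intro s hs
      have hs' : s ∈ Set.Ioc (-δ) 0 := by
        rwa [Set.uIoc_of_le (by linarith : -δ ≤ (0:ℝ))] at hs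
      have h1 : |g s - g 0| ≤ ε/2 := by
        have h2 := hδ₁prop (x := s) (by
          rw [Real.dist_eq, sub_zero, abs_lt]
          constructor <;> [linarith [hs'.1]; linarith [hs'.2, hδpos]])
        rw [Real.dist_eq] at h2
        linarith
      calc ‖p s * (g s - g 0)‖ = p s * |g s - g 0| := by
            rw [norm_mul, Real.norm_eq_abs, Real.norm_eq_abs, abs_of_nonneg (hp_nonneg s)]
        _ ≤ ε/2 * p s := by
            rw [mul_comm]
            exact mul_le_mul_of_nonneg_right h1 (hp_nonneg s)
    have habs : |∫ s in (-δ)..(0:ℝ), ε/2 * p s| = ε/2 * ∫ s in (-δ)..(0:ℝ), p s := by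
      rw [intervalIntegral.integral_const_mul, abs_mul,
        abs_of_nonneg (by linarith : (0:ℝ) ≤ ε/2), abs_of_pos hUpos]
    rw [Real.dist_eq]
    have hre : (f 0 - f (-δ))/(-util (-δ)) - g 0
        = (f 0 - f (-δ) - g 0 * (-util (-δ)))/(-util (-δ)) := by
      have hne : util (-δ) ≠ 0 := by
        intro h0
        rw [h0] at hutilpos
        norm_num at hutilpos
      field_simp
      ring
    rw [hre, abs_div, abs_of_pos hutilpos, hnum]
    have hle : |∫ s in (-δ)..(0:ℝ), p s * (g s - g 0)| ≤ ε/2 * (-util (-δ)) := by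
      rw [hU]
      calc |∫ s in (-δ)..(0:ℝ), p s * (g s - g 0)| ≤ |∫ s in (-δ)..(0:ℝ), ε/2 * p s| := hbound
        _ = ε/2 * ∫ s in (-δ)..(0:ℝ), p s := habs
    calc |∫ s in (-δ)..(0:ℝ), p s * (g s - g 0)| / (-util (-δ))
          ≤ (ε/2 * (-util (-δ))) / (-util (-δ)) := by
          exact div_le_div_of_nonneg_right hle hutilpos.le
      _ = ε/2 := by rw [mul_div_assoc, div_self (ne_of_gt hutilpos), mul_one]
      _ < ε := by linarith
  exact ⟨g 0, hlimR, hlimL⟩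

lemma resolvent_aux_conditions
    (P p r pd : ℝ → ℝ) (util vtil : ℝ → ℝ)
    (hpcont : Continuous p) (hrcont : Continuous r)
    (hpd_contOn : ContinuousOn pd {x : ℝ | x ≠ 0})
    (hp_pos : ∀ y : ℝ, y ≠ 0 → 0 < p y)
    (hr_pos : ∀ y : ℝ, y ≠ 0 → 0 < r y)
    (hputil : ∀ y : ℝ, y ≠ 0 → HasDerivAt util (p y) y)
    (hrvtil : ∀ y : ℝ, y ≠ 0 → HasDerivAt vtil (r y) y)
    (hp_deriv : ∀ y : ℝ, y ≠ 0 → HasDerivAt p (pd y) y)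
    (a b0 : ℝ) (ha : a < 0) (hb : 0 < b0)
    (A B : ℝ) (hAdef : A = a - 1) (hBdef : B = b0 + 1)
    (hsub : Set.Icc a b0 ⊆ Set.Ioo A B)
    (μ : ℝ) (hμ : 0 < μ)
    (F Ft : ℝ → ℝ) (hFtcont : Continuous Ft) (hFt_eq : ∀ q ∈ Set.Icc a b0, Ft q = F q)
    (f g : ℝ → ℝ) (hfcont : Continuous f) (hgcont : Continuous g)
    (hfd : ∀ t ∈ Set.Ioo A B, HasDerivAt f (p t * g t) t)
    (hgd : ∀ t ∈ Set.Ioo A B, HasDerivAt g (r t * (μ * f t - Ft t)) t) :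
    ContinuousOn f (Set.Icc a b0) ∧
      (∀ q ∈ Set.Icc a b0 \ {0}, DifferentiableAt ℝ f q) ∧
      ContinuousOn (deriv f) (Set.Icc a b0 \ {0}) ∧
      (∀ q ∈ Set.Icc a b0 \ {0}, DifferentiableAt ℝ (deriv f) q) ∧
      ContinuousOn (deriv (deriv f)) (Set.Icc a b0 \ {0}) ∧
      (∀ q ∈ Set.Icc a b0 \ {0},
        DifferentiableAt ℝ (fun x => deriv f x / deriv util x) q) ∧
      (∀ q ∈ Set.Icc a b0 \ {0},
        μ * f q - deriv (fun x => deriv f x / deriv util x) q / deriv vtil q = F q) := by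
  have hSsub : Set.Icc a b0 \ {0} ⊆ Set.Ioo A B := fun q hq => hsub hq.1
  have hSne : Set.Icc a b0 \ {0} ⊆ {x : ℝ | x ≠ 0} := fun q hq => hq.2
  -- deriv f agrees with p * g on Ioo A B
  have hevf : ∀ q ∈ Set.Ioo A B, deriv f =ᶠ[𝓝 q] fun x => p x * g x := by
    intro q hq
    filter_upwards [isOpen_Ioo.mem_nhds hq] with x hx
    exact (hfd x hx).deriv
  -- quotient function agrees with g near points of S
  have hev : ∀ q ∈ Set.Icc a b0 \ {0},
      (fun x => deriv f x / deriv util x) =ᶠ[𝓝 q] g := by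
    intro q hq
    have hq0 : q ≠ 0 := hq.2
    filter_upwards [isOpen_Ioo.mem_nhds (hSsub hq),
      isOpen_compl_singleton.mem_nhds (hq0 : q ∈ ({0} : Set ℝ)ᶜ)] with x hx1 hx2
    have hx0 : x ≠ 0 := hx2
    rw [(hfd x hx1).deriv, (hputil x hx0).deriv,
      mul_div_cancel_left₀ _ (ne_of_gt (hp_pos x hx0))]
  refine ⟨hfcont.continuousOn, ?_, ?_, ?_, ?_, ?_, ?_⟩
  · exact fun q hq => (hfd q (hSsub hq)).differentiableAt
  · apply ContinuousOn.congr ((hpcont.mul hgcont).continuousOn)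
    exact fun q hq => (hfd q (hSsub hq)).deriv
  · intro q hq
    refine ((hevf q (hSsub hq)).differentiableAt_iff).mpr ?_
    exact ((hp_deriv q hq.2).differentiableAt.mul (hgd q (hSsub hq)).differentiableAt)
  · -- continuity of second derivative
    have hD2 : ∀ q ∈ Set.Icc a b0 \ {0},
        deriv (deriv f) q = pd q * g q + p q * (r q * (μ * f q - Ft q)) := by
      intro q hq
      rw [(hevf q (hSsub hq)).deriv_eq]
      exact ((hp_deriv q hq.2).mul (hgd q (hSsub hq))).deriv
    apply ContinuousOn.congr
      (((hpd_contOn.mono hSne).mul hgcont.continuousOn).add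
        ((hpcont.continuousOn).mul ((hrcont.continuousOn).mul
          (((continuous_const.mul hfcont).sub hFtcont).continuousOn))))
    exact hD2
  · intro q hq
    exact ((hev q hq).differentiableAt_iff).mpr (hgd q (hSsub hq)).differentiableAt
  · intro q hq
    have h1 : deriv (fun x => deriv f x / deriv util x) q = deriv g q := (hev q hq).deriv_eq
    rw [h1, (hgd q (hSsub hq)).deriv, (hrvtil q hq.2).deriv,
      mul_div_cancel_left₀ _ (ne_of_gt (hr_pos q hq.2)), hFt_eq q hq.1]
    ring

/-- solvability of the resolvent equation μf − D_ṽD_ũf = F on [a, b₀] with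
the gluing condition at 0 and the boundary conditions D_ṽD_ũf = 0 (i.e. μf = F) at the
endpoints. -/
theorem resolvent_equation_solvable
    (lam bet : ℝ → ℝ)
    (hlam_smooth : ContDiff ℝ 1 lam)
    (hlam_bdd : ∃ M : ℝ, ∀ q : ℝ, |lam q| ≤ M)
    (hlam_zero : ∀ q ∈ Set.Icc (-1 : ℝ) 1, lam q = 0)
    (hlam_pos : ∀ q : ℝ, q ∉ Set.Icc (-1 : ℝ) 1 → 0 < lam q)
    (hbet_smooth : ContDiff ℝ 1 bet)
    (hbet_bdd : ∃ M : ℝ, ∀ q : ℝ, |bet q| ≤ M)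
    (u v : ℝ → ℝ)
    (hu : ∀ q : ℝ, u q =
      ∫ x in (0:ℝ)..q, lam x * Real.exp (-2 * ∫ y in (0:ℝ)..x, bet y * lam y))
    (hv : ∀ q : ℝ, v q =
      2 * ∫ x in (0:ℝ)..q, lam x * Real.exp (2 * ∫ y in (0:ℝ)..x, bet y * lam y))
    (a b0 : ℝ) (ha : a < 0) (hb : 0 < b0)
    (util vtil : ℝ → ℝ)
    (hutil_neg : ∀ y : ℝ, y < 0 → util y = u (y - 1))
    (hutil_pos : ∀ y : ℝ, 0 < y → util y = u (y + 1))
    (hutil_zero : util 0 = 0)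
    (hvtil_neg : ∀ y : ℝ, y < 0 → vtil y = v (y - 1))
    (hvtil_pos : ∀ y : ℝ, 0 < y → vtil y = v (y + 1))
    (hvtil_zero : vtil 0 = 0)
    (μ : ℝ) (hμ : 0 < μ)
    (F : ℝ → ℝ) (hF : ContinuousOn F (Set.Icc a b0)) :
    ∃ f : ℝ → ℝ,
      ContinuousOn f (Set.Icc a b0) ∧
      (∀ q ∈ Set.Icc a b0 \ {0}, DifferentiableAt ℝ f q) ∧
      ContinuousOn (deriv f) (Set.Icc a b0 \ {0}) ∧
      (∀ q ∈ Set.Icc a b0 \ {0}, DifferentiableAt ℝ (deriv f) q) ∧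
      ContinuousOn (deriv (deriv f)) (Set.Icc a b0 \ {0}) ∧
      (∀ q ∈ Set.Icc a b0 \ {0},
        DifferentiableAt ℝ (fun x => deriv f x / deriv util x) q) ∧
      (∀ q ∈ Set.Icc a b0 \ {0},
        μ * f q - deriv (fun x => deriv f x / deriv util x) q / deriv vtil q = F q) ∧
      (∃ L : ℝ,
        Tendsto (fun δ : ℝ => (f δ - f 0) / util δ) (𝓝[>] (0:ℝ)) (𝓝 L) ∧
        Tendsto (fun δ : ℝ => (f 0 - f (-δ)) / (-util (-δ))) (𝓝[>] (0:ℝ)) (𝓝 L)) ∧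
      μ * f a = F a ∧ μ * f b0 = F b0 := by
  classical
  set I : ℝ → ℝ := fun x => ∫ y in (0:ℝ)..x, bet y * lam y with hIdef
  have hblcont : Continuous fun y => bet y * lam y :=
    (hbet_smooth.continuous).mul (hlam_smooth.continuous)
  have hIderiv : ∀ x, HasDerivAt I (bet x * lam x) x := fun x =>
    intervalIntegral.integral_hasDerivAt_right (hblcont.intervalIntegrable _ _)
      (hblcont.stronglyMeasurable.stronglyMeasurableAtFilter) hblcont.continuousAt
  have hI1 : ContDiff ℝ 1 I := by
    rw [contDiff_one_iff_deriv]
    constructor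
    · exact fun x => (hIderiv x).differentiableAt
    · have : deriv I = fun x => bet x * lam x := funext fun x => (hIderiv x).deriv
      rw [this]; exact hblcont
  set P : ℝ → ℝ := fun x => lam x * Real.exp (-2 * I x) with hPdef
  set Q : ℝ → ℝ := fun x => lam x * Real.exp (2 * I x) with hQdef
  have hP1 : ContDiff ℝ 1 P :=
    hlam_smooth.mul ((Real.contDiff_exp.of_le le_top).comp (contDiff_const.mul hI1))
  have hQ1 : ContDiff ℝ 1 Q :=
    hlam_smooth.mul ((Real.contDiff_exp.of_le le_top).comp (contDiff_const.mul hI1))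
  have hPcont : Continuous P := hP1.continuous
  have hQcont : Continuous Q := hQ1.continuous
  have hPzero : ∀ x ∈ Set.Icc (-1:ℝ) 1, P x = 0 := fun x hx => by
    simp [hPdef, hlam_zero x hx]
  have hQzero : ∀ x ∈ Set.Icc (-1:ℝ) 1, Q x = 0 := fun x hx => by
    simp [hQdef, hlam_zero x hx]
  have hPpos : ∀ x, x ∉ Set.Icc (-1:ℝ) 1 → 0 < P x := fun x hx =>
    mul_pos (hlam_pos x hx) (Real.exp_pos _)
  have hQpos : ∀ x, x ∉ Set.Icc (-1:ℝ) 1 → 0 < Q x := fun x hx =>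
    mul_pos (hlam_pos x hx) (Real.exp_pos _)
  have hPnonneg : ∀ x, 0 ≤ P x := fun x => by
    by_cases hx : x ∈ Set.Icc (-1:ℝ) 1
    · rw [hPzero x hx]
    · exact (hPpos x hx).le
  have hQnonneg : ∀ x, 0 ≤ Q x := fun x => by
    by_cases hx : x ∈ Set.Icc (-1:ℝ) 1
    · rw [hQzero x hx]
    · exact (hQpos x hx).le
  have huP : ∀ q, u q = ∫ x in (0:ℝ)..q, P x := hu
  have hvQ : ∀ q, v q = 2 * ∫ x in (0:ℝ)..q, Q x := hv
  have hu_deriv : ∀ x, HasDerivAt u (P x) x := by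
    intro x
    have : HasDerivAt (fun q => ∫ x in (0:ℝ)..q, P x) (P x) x :=
      intervalIntegral.integral_hasDerivAt_right (hPcont.intervalIntegrable _ _)
        (hPcont.stronglyMeasurable.stronglyMeasurableAtFilter) hPcont.continuousAt
    exact this.congr_of_eventuallyEq (Eventually.of_forall fun q => (huP q))
  have hv_deriv : ∀ x, HasDerivAt v (2 * Q x) x := by
    intro x
    have : HasDerivAt (fun q => 2 * ∫ x in (0:ℝ)..q, Q x) (2 * Q x) x :=
      (intervalIntegral.integral_hasDerivAt_right (hQcont.intervalIntegrable _ _)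
        (hQcont.stronglyMeasurable.stronglyMeasurableAtFilter) hQcont.continuousAt).const_mul 2
    exact this.congr_of_eventuallyEq (Eventually.of_forall fun q => (hvQ q))
  -- the coefficient functions
  set p : ℝ → ℝ := fun y => if y ≤ 0 then P (y - 1) else P (y + 1) with hpdef
  set r : ℝ → ℝ := fun y => if y ≤ 0 then 2 * Q (y - 1) else 2 * Q (y + 1) with hrdef
  set pd : ℝ → ℝ := fun y => if y ≤ 0 then deriv P (y - 1) else deriv P (y + 1) with hpddef
  have hP1' : P (-1 : ℝ) = 0 := hPzero _ (by norm_num)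
  have hP1'' : P (1 : ℝ) = 0 := hPzero _ (by norm_num)
  have hQ1' : Q (-1 : ℝ) = 0 := hQzero _ (by norm_num)
  have hQ1'' : Q (1 : ℝ) = 0 := hQzero _ (by norm_num)
  have hpcont : Continuous p := by
    apply Continuous.if_le
      (hPcont.comp (continuous_id.sub continuous_const))
      (hPcont.comp (continuous_id.add continuous_const))
      continuous_id continuous_const
    intro y hy
    have hy0 : y = 0 := hy
    subst hy0
    norm_num [hP1', hP1'']
  have hrcont : Continuous r := by
    apply Continuous.if_le
      ((continuous_const.mul (hQcont.comp (continuous_id.sub continuous_const))))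
      ((continuous_const.mul (hQcont.comp (continuous_id.add continuous_const))))
      continuous_id continuous_const
    intro y hy
    have hy0 : y = 0 := hy
    subst hy0
    norm_num [hQ1', hQ1'']
  have hp_nonneg : ∀ y, 0 ≤ p y := fun y => by
    simp only [hpdef]; split_ifs <;> exact hPnonneg _
  have hr_nonneg : ∀ y, 0 ≤ r y := fun y => by
    simp only [hrdef]; split_ifs <;> [linarith [hQnonneg (y-1)]; linarith [hQnonneg (y+1)]]
  have hp_pos : ∀ y : ℝ, y ≠ 0 → 0 < p y := by
    intro y hy
    rcases lt_or_gt_of_ne hy with h | h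
    · rw [hpdef]; simp only [h.le, if_true, reduceIte]
      exact hPpos _ (by simp only [Set.mem_Icc]; push_neg; intro h'; linarith)
    · rw [hpdef]; simp only [not_le.mpr h, if_false, reduceIte]
      exact hPpos _ (by simp only [Set.mem_Icc]; push_neg; intro h'; linarith)
  have hr_pos : ∀ y : ℝ, y ≠ 0 → 0 < r y := by
    intro y hy
    rcases lt_or_gt_of_ne hy with h | h
    · rw [hrdef]; simp only [h.le, if_true, reduceIte]
      have := hQpos (y - 1) (by simp only [Set.mem_Icc]; push_neg; intro h'; linarith)
      linarith
    · rw [hrdef]; simp only [not_le.mpr h, if_false, reduceIte]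
      have := hQpos (y + 1) (by simp only [Set.mem_Icc]; push_neg; intro h'; linarith)
      linarith
  -- derivatives of util and vtil
  have hputil : ∀ y : ℝ, y ≠ 0 → HasDerivAt util (p y) y := by
    intro y hy
    rcases lt_or_gt_of_ne hy with h | h
    · have h1 : HasDerivAt (fun t => u (t - 1)) (P (y - 1)) y := by
        simpa [Function.comp_def] using (hu_deriv (y - 1)).comp y ((hasDerivAt_id y).sub_const 1)
      have h2 : p y = P (y - 1) := by rw [hpdef]; simp [h.le]
      rw [h2]
      apply h1.congr_of_eventuallyEq
      filter_upwards [Iio_mem_nhds h] with t ht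
      exact hutil_neg t ht
    · have h1 : HasDerivAt (fun t => u (t + 1)) (P (y + 1)) y := by
        simpa [Function.comp_def] using (hu_deriv (y + 1)).comp y ((hasDerivAt_id y).add_const 1)
      have h2 : p y = P (y + 1) := by rw [hpdef]; simp [not_le.mpr h]
      rw [h2]
      apply h1.congr_of_eventuallyEq
      filter_upwards [Ioi_mem_nhds h] with t ht
      exact hutil_pos t ht
  have hrvtil : ∀ y : ℝ, y ≠ 0 → HasDerivAt vtil (r y) y := by
    intro y hy
    rcases lt_or_gt_of_ne hy with h | h
    · have h1 : HasDerivAt (fun t => v (t - 1)) (2 * Q (y - 1)) y := by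
        simpa [Function.comp_def] using (hv_deriv (y - 1)).comp y ((hasDerivAt_id y).sub_const 1)
      have h2 : r y = 2 * Q (y - 1) := by rw [hrdef]; simp [h.le]
      rw [h2]
      apply h1.congr_of_eventuallyEq
      filter_upwards [Iio_mem_nhds h] with t ht
      exact hvtil_neg t ht
    · have h1 : HasDerivAt (fun t => v (t + 1)) (2 * Q (y + 1)) y := by
        simpa [Function.comp_def] using (hv_deriv (y + 1)).comp y ((hasDerivAt_id y).add_const 1)
      have h2 : r y = 2 * Q (y + 1) := by rw [hrdef]; simp [not_le.mpr h]
      rw [h2]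
      apply h1.congr_of_eventuallyEq
      filter_upwards [Ioi_mem_nhds h] with t ht
      exact hvtil_pos t ht
  -- derivative of p away from 0
  have hPderiv : ∀ x, HasDerivAt P (deriv P x) x := fun x =>
    ((hP1.differentiable one_ne_zero) x).hasDerivAt
  have hdPcont : Continuous (deriv P) := (contDiff_one_iff_deriv.mp hP1).2
  have hp_deriv : ∀ y : ℝ, y ≠ 0 → HasDerivAt p (pd y) y := by
    intro y hy
    rcases lt_or_gt_of_ne hy with h | h
    · have h1 : HasDerivAt (fun t => P (t - 1)) (deriv P (y - 1)) y := by
        simpa [Function.comp_def] using (hPderiv (y - 1)).comp y ((hasDerivAt_id y).sub_const 1)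
      have h2 : pd y = deriv P (y - 1) := by rw [hpddef]; simp [h.le]
      rw [h2]
      apply h1.congr_of_eventuallyEq
      filter_upwards [Iio_mem_nhds h] with t ht
      simp only [hpdef]; rw [if_pos (le_of_lt (show t < 0 from ht))]
    · have h1 : HasDerivAt (fun t => P (t + 1)) (deriv P (y + 1)) y := by
        simpa [Function.comp_def] using (hPderiv (y + 1)).comp y ((hasDerivAt_id y).add_const 1)
      have h2 : pd y = deriv P (y + 1) := by rw [hpddef]; simp [not_le.mpr h]
      rw [h2]
      apply h1.congr_of_eventuallyEq
      filter_upwards [Ioi_mem_nhds h] with t ht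
      simp only [hpdef]; rw [if_neg (not_le.mpr (show (0:ℝ) < t from ht))]
  have hpd_contOn : ContinuousOn pd {x : ℝ | x ≠ 0} := by
    intro x hx
    apply ContinuousAt.continuousWithinAt
    rcases lt_or_gt_of_ne (hx : x ≠ 0) with h | h
    · apply ContinuousAt.congr
        (f := fun t => deriv P (t - 1))
        ((hdPcont.comp (continuous_sub_right (1:ℝ))).continuousAt)
      filter_upwards [Iio_mem_nhds h] with t ht
      simp only [hpddef]; rw [if_pos (le_of_lt (show t < 0 from ht))]
    · apply ContinuousAt.congr
        (f := fun t => deriv P (t + 1))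
        ((hdPcont.comp (continuous_add_right (1:ℝ))).continuousAt)
      filter_upwards [Ioi_mem_nhds h] with t ht
      simp only [hpddef]; rw [if_neg (not_le.mpr (show (0:ℝ) < t from ht))]
  -- clamped version of F
  set Ft : ℝ → ℝ := fun t => F (max a (min t b0)) with hFtdef
  have hclamp_mem : ∀ t : ℝ, max a (min t b0) ∈ Set.Icc a b0 := fun t =>
    ⟨le_max_left _ _, max_le (by linarith) (min_le_right _ _)⟩
  have hFtcont : Continuous Ft :=
    hF.comp_continuous (continuous_const.max (continuous_id.min continuous_const)) hclamp_mem
  have hFt_eq : ∀ q ∈ Set.Icc a b0, Ft q = F q := by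
    intro q hq
    simp only [hFtdef]
    rw [min_eq_left hq.2, max_eq_right hq.1]
  set A : ℝ := a - 1 with hAdef
  set B : ℝ := b0 + 1 with hBdef
  have hAB : A ≤ B := by rw [hAdef, hBdef]; linarith
  have haI : a ∈ Set.Icc A B := ⟨by rw [hAdef]; linarith, by rw [hBdef]; linarith⟩
  have hsub : Set.Icc a b0 ⊆ Set.Ioo A B := fun x hx =>
    ⟨by rw [hAdef]; linarith [hx.1], by rw [hBdef]; linarith [hx.2]⟩
  -- the two fundamental solutions
  obtain ⟨f0, g0, hf0a, hg0a, hf0c, hg0c, hf0d, hg0d⟩ :=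
    exists_system_solution p r Ft hpcont hrcont hFtcont μ A B hAB a haI (F a / μ) 0
  obtain ⟨f1, g1, hf1a, hg1a, hf1c, hg1c, hf1d, hg1d⟩ :=
    exists_system_solution p r (fun _ => 0) hpcont hrcont continuous_const μ A B hAB a haI 0 1
  -- monotonicity helper
  have mono_aux : ∀ (φ D : ℝ → ℝ), (∀ t ∈ Set.Ioo A B, HasDerivAt φ (D t) t) →
      (∀ t ∈ Set.Ioo a b0, 0 ≤ D t) → MonotoneOn φ (Set.Icc a b0) := by
    intro φ D hd hD
    apply monotoneOn_of_deriv_nonneg (convex_Icc a b0)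
    · intro t ht
      exact ((hd t (hsub ht)).differentiableAt.continuousAt).continuousWithinAt
    · rw [interior_Icc]
      intro t ht
      exact (hd t (hsub (Set.Ioo_subset_Icc_self ht))).differentiableAt.differentiableWithinAt
    · rw [interior_Icc]
      intro t ht
      rw [(hd t (hsub (Set.Ioo_subset_Icc_self ht))).deriv]
      exact hD t ht
  -- positivity facts for the homogeneous solution
  have hprod : ∀ t ∈ Set.Icc a b0, 0 ≤ f1 t * g1 t := by
    have hmono := mono_aux (fun t => f1 t * g1 t)
      (fun t => p t * g1 t * g1 t + f1 t * (r t * (μ * f1 t - 0)))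
      (fun t ht => ((hf1d t ht).mul (hg1d t ht)))
      (fun t ht => by
        show 0 ≤ p t * g1 t * g1 t + f1 t * (r t * (μ * f1 t - 0))
        have h1 : 0 ≤ p t * g1 t * g1 t := by
          rw [mul_assoc]; exact mul_nonneg (hp_nonneg t) (mul_self_nonneg _)
        have h2 : 0 ≤ f1 t * (r t * (μ * f1 t - 0)) := by
          rw [sub_zero, show f1 t * (r t * (μ * f1 t)) = μ * r t * (f1 t * f1 t) from by ring]
          exact mul_nonneg (mul_nonneg hμ.le (hr_nonneg t)) (mul_self_nonneg _)
        linarith)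
    intro t ht
    have := hmono (Set.left_mem_Icc.mpr (by linarith)) ht ht.1
    simpa [hf1a, hg1a] using this
  have hg1sq : ∀ t ∈ Set.Icc a b0, 1 ≤ g1 t ^ 2 := by
    have hmono := mono_aux (fun t => g1 t ^ 2)
      (fun t => 2 * g1 t * (r t * (μ * f1 t - 0)))
      (fun t ht => by simpa [Pi.pow_def] using ((hg1d t ht).pow 2))
      (fun t ht => by
        show 0 ≤ 2 * g1 t * (r t * (μ * f1 t - 0))
        rw [sub_zero]
        have h2 : 0 ≤ (f1 t * g1 t) * r t * μ :=
          mul_nonneg (mul_nonneg (hprod t (Set.Ioo_subset_Icc_self ht)) (hr_nonneg t)) hμ.le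
        nlinarith)
    intro t ht
    have := hmono (Set.left_mem_Icc.mpr (by linarith)) ht ht.1
    simpa [hg1a] using this
  have hg1_ge1 : ∀ t ∈ Set.Icc a b0, 1 ≤ g1 t := by
    intro t ht
    by_contra hcon
    push_neg at hcon
    have hle : g1 t ≤ -1 := by nlinarith [hg1sq t ht, sq_nonneg (g1 t)]
    have h0mem : (0:ℝ) ∈ Set.Icc (g1 t) (g1 a) := ⟨by linarith, by rw [hg1a]; norm_num⟩
    obtain ⟨s, hs, hgs⟩ := intermediate_value_Icc' ht.1 (hg1c.continuousOn) h0mem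
    have hsmem : s ∈ Set.Icc a b0 := ⟨hs.1, le_trans hs.2 ht.2⟩
    have := hg1sq s hsmem
    rw [hgs] at this
    norm_num at this
  have hf1_nonneg : ∀ t ∈ Set.Icc a b0, 0 ≤ f1 t := by
    have hmono := mono_aux f1 (fun t => p t * g1 t) hf1d
      (fun t ht => mul_nonneg (hp_nonneg t)
        (by linarith [hg1_ge1 t (Set.Ioo_subset_Icc_self ht)]))
    intro t ht
    have := hmono (Set.left_mem_Icc.mpr (by linarith)) ht ht.1
    simpa [hf1a] using this
  -- strict positivity of f1 at b0
  have hpint : ∀ c d : ℝ, IntervalIntegrable p volume c d := fun c d =>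
    hpcont.intervalIntegrable c d
  have hf1b0 : 0 < f1 b0 := by
    have hprim : ∀ x : ℝ, HasDerivAt (fun t => ∫ s in a..t, p s) (p x) x := fun x =>
      intervalIntegral.integral_hasDerivAt_right (hpint _ _)
        (hpcont.stronglyMeasurable.stronglyMeasurableAtFilter) hpcont.continuousAt
    have hmono := mono_aux (fun t => f1 t - ∫ s in a..t, p s)
      (fun t => p t * g1 t - p t)
      (fun t ht => (hf1d t ht).sub (hprim t))
      (fun t ht => by
        have h1 := hg1_ge1 t (Set.Ioo_subset_Icc_self ht)
        have h2 := hp_nonneg t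
        show 0 ≤ p t * g1 t - p t
        nlinarith)
    have hab0 : a ≤ b0 := by linarith
    have h := hmono (Set.left_mem_Icc.mpr hab0) (Set.right_mem_Icc.mpr hab0) hab0
    replace h : 0 ≤ f1 b0 - ∫ s in a..b0, p s := by simpa [hf1a] using h
    have hsplit : (∫ s in a..b0, p s) = (∫ s in a..(b0/2), p s) + ∫ s in (b0/2)..b0, p s :=
      (intervalIntegral.integral_add_adjacent_intervals (hpint _ _) (hpint _ _)).symm
    have h1 : 0 ≤ ∫ s in a..(b0/2), p s :=
      intervalIntegral.integral_nonneg (by linarith) (fun s _ => hp_nonneg s)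
    have h2 : 0 < ∫ s in (b0/2)..b0, p s := by
      apply intervalIntegral.intervalIntegral_pos_of_pos_on (hpint _ _)
      · intro s hs
        exact hp_pos s (by linarith [hs.1])
      · linarith
    have : 0 < ∫ s in a..b0, p s := by rw [hsplit]; linarith
    linarith
  -- the solution
  set sc : ℝ := (F b0 / μ - f0 b0) / f1 b0 with hscdef
  set f : ℝ → ℝ := fun t => f0 t + sc * f1 t with hfdef
  set g : ℝ → ℝ := fun t => g0 t + sc * g1 t with hgdef
  have hfcont : Continuous f := hf0c.add (continuous_const.mul hf1c)
  have hgcont : Continuous g := hg0c.add (continuous_const.mul hg1c)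
  have hfd : ∀ t ∈ Set.Ioo A B, HasDerivAt f (p t * g t) t := by
    intro t ht
    have h := (hf0d t ht).add ((hf1d t ht).const_mul sc)
    convert h using 1
    · rfl
    · rfl
    · rfl
    rw [hgdef]; ring
  have hgd : ∀ t ∈ Set.Ioo A B, HasDerivAt g (r t * (μ * f t - Ft t)) t := by
    intro t ht
    have h := (hg0d t ht).add ((hg1d t ht).const_mul sc)
    convert h using 1
    · rfl
    · rfl
    · rfl
    rw [hfdef]; ring
  have hfa : f a = F a / μ := by rw [hfdef]; simp [hf0a, hf1a]
  have hfb0 : f b0 = F b0 / μ := by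
    rw [hfdef, hscdef]
    field_simp
    ring
  -- assemble the conclusion
  obtain ⟨h1, h2, h3, h4, h5, h6, h7⟩ :=
    resolvent_aux_conditions P p r pd util vtil hpcont hrcont hpd_contOn hp_pos hr_pos
      hputil hrvtil hp_deriv a b0 ha hb A B hAdef hBdef hsub μ hμ F Ft hFtcont hFt_eq
      f g hfcont hgcont hfd hgd
  obtain ⟨L, hL1, hL2⟩ :=
    resolvent_aux_limits u util P p hPcont hpcont hpdef hPzero hP1' hP1'' hp_nonneg hp_pos
      hpint huP a b0 ha hb hutil_neg hutil_pos A B hAdef hBdef f g hfcont hgcont hfd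
  refine ⟨f, h1, h2, h3, h4, h5, h6, h7, ⟨L, hL1, hL2⟩, ?_, ?_⟩
  · rw [hfa]
    field_simp
  · rw [hfb0]
    field_simp
end
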